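/- arXiv:2406.16015 — 4 statements merged into one kernel-verified Lean document; each statement's English description precedes it below -/
import Mathlib

section
/- Suppose G_1, …, G_m are finite subgraphs of the infinite path Path_ℤ with G_1 ∪ ⋯ ∪ G_m = Path_k and Δ⃗(G_1,…,G_m) = 1. Then there exists a shift permutation σ of {1,…,m} such that λ⃗(G_{σ(1)},…,G_{σ(m)}) ≥ k/4. -/
noncomputable section

/-- A finite subgraph of the infinite path `Path_ℤ`, identified with its (finite) edge set:
the integer `i` encodes the edge `{i-1, i}` of `Path_ℤ`. -/
abbrev PGraph := Finset ℤ

/-- The connected component of the edge `i` in `G`: all edges `j ∈ G` such that every edge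
lying between `i` and `j` also belongs to `G`. -/
def comp (G : PGraph) (i : ℤ) : PGraph :=
  G.filter fun j => ∀ l ∈ Finset.Icc (min i j) (max i j), l ∈ G

/-- `Δ(G)`: the number of connected components of `G`. -/
def Delta (G : PGraph) : ℕ := (G.filter fun i => i - 1 ∉ G).card

/-- `λ(G)`: the maximum number of edges of a connected component of `G`. -/
def lam (G : PGraph) : ℕ := G.sup fun i => (comp G i).card

/-- `G ⊖ F`: the union of the connected components of `G` that are vertex-disjoint from `F`.
(The edges `{i-1,i}` and `{f-1,f}` share a vertex iff `|i - f| ≤ 1`.) -/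
def ominus (G F : PGraph) : PGraph :=
  G.filter fun i => ∀ j ∈ comp G i, ∀ f ∈ F, 1 < (j - f).natAbs

/-- `Path_k`: the subgraph of `Path_ℤ` with edges `{i-1,i}` for `1 ≤ i ≤ k`. -/
def pathk (k : ℕ) : PGraph := Finset.Icc 1 (k : ℤ)

/-- `Δ⃗(G_1,…,G_m ∣ F)`. -/
def dvecFrom : PGraph → List PGraph → ℕ
  | _, [] => 0
  | F, G :: L => Delta (ominus G F) + dvecFrom (F ∪ G) L

/-- `Δ⃗(G_1,…,G_m)`. -/
def dvec (L : List PGraph) : ℕ := dvecFrom ∅ L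

def lvecFrom : PGraph → List PGraph → ℕ
  | _, [] => 0
  | F, G :: L => lam (ominus G F) + lvecFrom (F ∪ G) L

/-- `λ⃗(G_1,…,G_m)`. -/
def lvec (L : List PGraph) : ℕ := lvecFrom ∅ L

def ldvecFrom : PGraph → List PGraph → ℕ
  | _, [] => 0
  | F, G :: L => lam (ominus G F) * Delta (ominus G F) + ldvecFrom (F ∪ G) L

/-- `λΔ⃗(G_1,…,G_m)`. -/
def ldvec (L : List PGraph) : ℕ := ldvecFrom ∅ L

/-- The sequence `G_1, …, G_m` as a list. -/
def seqList {m : ℕ} (G : Fin m → PGraph) : List PGraph := (List.finRange m).map G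

/-- `G_1 ∪ ⋯ ∪ G_{j-1}` (the union of the entries strictly before `j`). -/
def unionBelow {m : ℕ} (G : Fin m → PGraph) (j : Fin m) : PGraph :=
  (Finset.univ.filter fun i => i < j).biUnion G

/-- A shift permutation: `σ(j) ≥ j - 1` for all `j`. -/
def IsShiftPerm {m : ℕ} (σ : Equiv.Perm (Fin m)) : Prop :=
  ∀ j : Fin m, (j : ℕ) ≤ (σ j : ℕ) + 1

set_option linter.dupNamespace false


namespace PreMain


lemma mem_comp {G : PGraph} {i j : ℤ} :
    j ∈ comp G i ↔ j ∈ G ∧ ∀ l ∈ Finset.Icc (min i j) (max i j), l ∈ G := Finset.mem_filter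

lemma comp_subset (G : PGraph) (i : ℤ) : comp G i ⊆ G := Finset.filter_subset _ _

lemma self_mem_comp {G : PGraph} {i : ℤ} (h : i ∈ G) : i ∈ comp G i := by
  rw [mem_comp]
  refine ⟨h, fun l hl => ?_⟩
  simp only [Finset.mem_Icc] at hl
  have : l = i := by omega
  simpa [this]

lemma mem_comp_trans {G : PGraph} {i j l : ℤ} (hj : j ∈ comp G i)
    (hl : l ∈ Finset.Icc (min i j) (max i j)) : l ∈ comp G i := by
  rw [mem_comp] at hj ⊢
  simp only [Finset.mem_Icc] at hl
  refine ⟨hj.2 l (by simp [Finset.mem_Icc]; omega), fun l' hl' => ?_⟩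
  simp only [Finset.mem_Icc] at hl'
  exact hj.2 l' (by simp [Finset.mem_Icc]; omega)

lemma mem_comp_symm {G : PGraph} {i j : ℤ} (hi : i ∈ G) (hj : j ∈ comp G i) :
    i ∈ comp G j := by
  rw [mem_comp] at hj ⊢
  refine ⟨hi, fun l hl => ?_⟩
  simp only [Finset.mem_Icc] at hl
  exact hj.2 l (by simp [Finset.mem_Icc]; omega)

lemma comp_subset_of_mem {G : PGraph} {i j : ℤ} (hj : j ∈ comp G i) :
    comp G j ⊆ comp G i := by
  intro x hx
  rw [mem_comp] at hj hx ⊢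
  refine ⟨hx.1, fun l hl => ?_⟩
  simp only [Finset.mem_Icc] at hl
  rcases (by omega : (min i j ≤ l ∧ l ≤ max i j) ∨ (min j x ≤ l ∧ l ≤ max j x)) with h | h
  · exact hj.2 l (by simp [Finset.mem_Icc]; omega)
  · exact hx.2 l (by simp [Finset.mem_Icc]; omega)

lemma comp_eq_of_mem {G : PGraph} {i j : ℤ} (hi : i ∈ G) (hj : j ∈ comp G i) :
    comp G j = comp G i := by
  apply Finset.Subset.antisymm (comp_subset_of_mem hj)
  exact comp_subset_of_mem (mem_comp_symm hi hj)

lemma comp_max_eq_Icc {G : PGraph} {ρ : ℤ} (hρ : ρ ∈ G) (hmax : ∀ g ∈ G, g ≤ ρ) :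
    comp G ρ = Finset.Icc ((comp G ρ).min' ⟨ρ, self_mem_comp hρ⟩) ρ := by
  ext x
  simp only [Finset.mem_Icc]
  constructor
  · intro hx
    exact ⟨Finset.min'_le _ _ hx, hmax x (comp_subset _ _ hx)⟩
  · rintro ⟨h1, h2⟩
    have hc := Finset.min'_mem (comp G ρ) ⟨ρ, self_mem_comp hρ⟩
    have hcρ : (comp G ρ).min' ⟨ρ, self_mem_comp hρ⟩ ≤ ρ := Finset.min'_le _ _ (self_mem_comp hρ)
    exact mem_comp_trans hc (by simp [Finset.mem_Icc]; omega)

lemma mem_ominus {G F : PGraph} {i : ℤ} :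
    i ∈ ominus G F ↔ i ∈ G ∧ ∀ j ∈ comp G i, ∀ f ∈ F, 1 < (j - f).natAbs := Finset.mem_filter

lemma ominus_empty (G : PGraph) : ominus G ∅ = G := by
  ext i; simp [mem_ominus]

lemma ominus_subset (G F : PGraph) : ominus G F ⊆ G := Finset.filter_subset _ _

lemma card_comp_le_lam {G : PGraph} {i : ℤ} (h : i ∈ G) : (comp G i).card ≤ lam G := by
  show (comp G i).card ≤ G.sup fun i => (comp G i).card
  exact Finset.le_sup (f := fun i => (comp G i).card) h

lemma Delta_eq_zero_iff {H : PGraph} : Delta H = 0 ↔ H = ∅ := by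
  constructor
  · intro h
    by_contra hne0
    have hne : H.Nonempty := Finset.nonempty_iff_ne_empty.mpr hne0
    have hmin := H.min'_mem hne
    have : H.min' hne ∈ H.filter fun i => i - 1 ∉ H := by
      rw [Finset.mem_filter]
      refine ⟨hmin, fun hc => ?_⟩
      have := H.min'_le _ hc
      omega
    have : 0 < Delta H := Finset.card_pos.mpr ⟨_, this⟩
    omega
  · intro h; simp [Delta, h]

lemma nonempty_of_Delta_pos {H : PGraph} (h : H ≠ ∅) : 1 ≤ Delta H := by
  rcases Nat.eq_zero_or_pos (Delta H) with h0 | h1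
  · exact absurd (Delta_eq_zero_iff.mp h0) h
  · omega

lemma eq_Icc_of_Delta_eq_one {H : PGraph} (hne : H.Nonempty) (h : Delta H = 1) :
    H = Finset.Icc (H.min' hne) (H.max' hne) := by
  have hsub : H ⊆ Finset.Icc (H.min' hne) (H.max' hne) := fun x hx => by
    simp [Finset.mem_Icc, Finset.min'_le _ _ hx, Finset.le_max' _ _ hx]
  apply Finset.Subset.antisymm hsub
  intro x hx
  simp only [Finset.mem_Icc] at hx
  by_contra hxH
  -- x ∉ H, min ≤ x ≤ max
  have hxmax : x ≠ H.max' hne := fun he => hxH (he ▸ H.max'_mem hne)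
  have hxmin : x ≠ H.min' hne := fun he => hxH (he ▸ H.min'_mem hne)
  set S := H.filter fun g => x < g with hS
  have hSne : S.Nonempty := ⟨H.max' hne, by
    rw [Finset.mem_filter]
    exact ⟨H.max'_mem hne, by omega⟩⟩
  set y := S.min' hSne with hy
  have hyS : y ∈ S := S.min'_mem hSne
  rw [Finset.mem_filter] at hyS
  have hy1 : y - 1 ∉ H := by
    intro hc
    have hxy : x < y := hyS.2
    have : y - 1 ≠ x := fun he => hxH (he ▸ hc)
    have : y - 1 ∈ S := by rw [Finset.mem_filter]; exact ⟨hc, by omega⟩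
    have := S.min'_le _ this
    omega
  have hmin1 : H.min' hne - 1 ∉ H := fun hc => by
    have := H.min'_le _ hc; omega
  have hyne : y ≠ H.min' hne := by
    have := H.min'_le _ hyS.1
    intro he; rw [he] at hyS; omega
  have h2 : ({H.min' hne, y} : Finset ℤ) ⊆ H.filter fun i => i - 1 ∉ H := by
    intro z hz
    simp only [Finset.mem_insert, Finset.mem_singleton] at hz
    rcases hz with rfl | rfl
    · rw [Finset.mem_filter]; exact ⟨H.min'_mem hne, hmin1⟩
    · rw [Finset.mem_filter]; exact ⟨hyS.1, hy1⟩
  have hcard2 : 2 ≤ Delta H := by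
    have := Finset.card_le_card h2
    rwa [Finset.card_pair (by omega : H.min' hne ≠ y)] at this
  omega

/-- Survival lemma. -/
lemma surv {G F : PGraph} {r : ℤ} (hr : r ∈ G)
    (hfar : ∀ x ∈ comp G r, ∀ f ∈ F, 1 < (x - f).natAbs) :
    (comp G r).card ≤ lam (ominus G F) := by
  have hKsub : comp G r ⊆ ominus G F := by
    intro x hx
    rw [mem_ominus]
    refine ⟨comp_subset _ _ hx, ?_⟩
    rw [comp_eq_of_mem hr hx]
    exact hfar
  have hrm : r ∈ ominus G F := hKsub (self_mem_comp hr)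
  have hsub2 : comp G r ⊆ comp (ominus G F) r := by
    intro x hx
    rw [mem_comp]
    refine ⟨hKsub hx, fun l hl => ?_⟩
    exact hKsub (mem_comp_trans hx hl)
  calc (comp G r).card ≤ (comp (ominus G F) r).card := Finset.card_le_card hsub2
    _ ≤ lam (ominus G F) := card_comp_le_lam hrm


lemma unionBelow_zero {m : ℕ} (H : Fin (m+1) → PGraph) : unionBelow H 0 = ∅ := by
  unfold unionBelow
  have h : (Finset.univ.filter fun i : Fin (m+1) => i < 0) = ∅ := by
    ext i; simp [Fin.not_lt_zero]
  simp [h]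

lemma unionBelow_succ {m : ℕ} (H : Fin (m+1) → PGraph) (p : Fin m) :
    unionBelow H p.succ = H 0 ∪ unionBelow (fun j => H j.succ) p := by
  unfold unionBelow
  ext x
  simp only [Finset.mem_biUnion, Finset.mem_filter, Finset.mem_univ, true_and,
    Finset.mem_union]
  constructor
  · rintro ⟨i, hi, hx⟩
    rcases Fin.eq_zero_or_eq_succ i with rfl | ⟨j, rfl⟩
    · exact Or.inl hx
    · exact Or.inr ⟨j, by rwa [Fin.succ_lt_succ_iff] at hi, hx⟩
  · rintro (hx | ⟨j, hj, hx⟩)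
    · exact ⟨0, Fin.succ_pos p, hx⟩
    · exact ⟨j.succ, Fin.succ_lt_succ_iff.mpr hj, hx⟩

lemma seqList_succ {m : ℕ} (H : Fin (m+1) → PGraph) :
    seqList H = H 0 :: seqList (fun j => H j.succ) := by
  unfold seqList
  rw [List.finRange_succ]
  simp [List.map_map, Function.comp]

lemma lvecFrom_cons (F A : PGraph) (L : List PGraph) :
    lvecFrom F (A :: L) = lam (ominus A F) + lvecFrom (F ∪ A) L := rfl

lemma dvecFrom_cons (F A : PGraph) (L : List PGraph) :
    dvecFrom F (A :: L) = Delta (ominus A F) + dvecFrom (F ∪ A) L := rfl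

lemma lvecFrom_seqList (m : ℕ) : ∀ (H : Fin m → PGraph) (F : PGraph),
    lvecFrom F (seqList H) = ∑ p : Fin m, lam (ominus (H p) (F ∪ unionBelow H p)) := by
  induction m with
  | zero =>
    intro H F
    have h : seqList H = [] := by unfold seqList; simp
    simp [h, lvecFrom]
  | succ m ih =>
    intro H F
    rw [seqList_succ, lvecFrom_cons, ih (fun j => H j.succ) (F ∪ H 0), Fin.sum_univ_succ,
      unionBelow_zero H, Finset.union_empty]
    exact congrArg _ (Finset.sum_congr rfl fun p _ => by
      rw [unionBelow_succ H p, Finset.union_assoc])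

lemma dvecFrom_seqList (m : ℕ) : ∀ (H : Fin m → PGraph) (F : PGraph),
    dvecFrom F (seqList H) = ∑ p : Fin m, Delta (ominus (H p) (F ∪ unionBelow H p)) := by
  induction m with
  | zero =>
    intro H F
    have h : seqList H = [] := by unfold seqList; simp
    simp [h, dvecFrom]
  | succ m ih =>
    intro H F
    rw [seqList_succ, dvecFrom_cons, ih (fun j => H j.succ) (F ∪ H 0), Fin.sum_univ_succ,
      unionBelow_zero H, Finset.union_empty]
    exact congrArg _ (Finset.sum_congr rfl fun p _ => by
      rw [unionBelow_succ H p, Finset.union_assoc])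

lemma lvec_seqList {m : ℕ} (H : Fin m → PGraph) :
    lvec (seqList H) = ∑ p : Fin m, lam (ominus (H p) (unionBelow H p)) := by
  unfold lvec
  rw [lvecFrom_seqList]
  exact Finset.sum_congr rfl fun p _ => by rw [Finset.empty_union]

lemma dvec_seqList {m : ℕ} (H : Fin m → PGraph) :
    dvec (seqList H) = ∑ p : Fin m, Delta (ominus (H p) (unionBelow H p)) := by
  unfold dvec
  rw [dvecFrom_seqList]
  exact Finset.sum_congr rfl fun p _ => by rw [Finset.empty_union]

section PermSec

def cfun (a b x : ℕ) : ℕ := if x = a then b else if a < x ∧ x ≤ b then x - 1 else x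
def cinv (a b x : ℕ) : ℕ := if x = b then a else if a ≤ x ∧ x < b then x + 1 else x

lemma cfun_lt {m a b x : ℕ} (h : a ≤ b) (hb : b < m) (hx : x < m) : cfun a b x < m := by
  unfold cfun; split_ifs <;> omega

lemma cinv_lt {m a b x : ℕ} (h : a ≤ b) (hb : b < m) (hx : x < m) : cinv a b x < m := by
  unfold cinv; split_ifs <;> omega

lemma cinv_cfun {a b x : ℕ} (h : a ≤ b) : cinv a b (cfun a b x) = x := by
  unfold cfun cinv; split_ifs <;> omega

lemma cfun_cinv {a b x : ℕ} (h : a ≤ b) : cfun a b (cinv a b x) = x := by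
  unfold cfun cinv; split_ifs <;> omega

def cyc (m a b : ℕ) : Equiv.Perm (Fin m) :=
  if h : a ≤ b ∧ b < m then
    { toFun := fun p => ⟨cfun a b p.val, cfun_lt h.1 h.2 p.2⟩
      invFun := fun q => ⟨cinv a b q.val, cinv_lt h.1 h.2 q.2⟩
      left_inv := fun p => Fin.ext (cinv_cfun h.1)
      right_inv := fun q => Fin.ext (cfun_cinv h.1) }
  else 1

lemma cyc_val {m a b : ℕ} (h1 : a ≤ b) (h2 : b < m) (p : Fin m) :
    (cyc m a b p).val = cfun a b p.val := by
  unfold cyc; rw [dif_pos ⟨h1, h2⟩]; rfl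

lemma cyc_fix_lt {m a b : ℕ} (h1 : a ≤ b) (h2 : b < m) {p : Fin m} (hp : p.val < a) :
    cyc m a b p = p := by
  apply Fin.ext; rw [cyc_val h1 h2]; unfold cfun; split_ifs <;> omega

lemma cyc_fix_gt {m a b : ℕ} (h1 : a ≤ b) (h2 : b < m) {p : Fin m} (hp : b < p.val) :
    cyc m a b p = p := by
  apply Fin.ext; rw [cyc_val h1 h2]; unfold cfun; split_ifs <;> omega

lemma cyc_apply_a {m a b : ℕ} (h1 : a ≤ b) (h2 : b < m) {p : Fin m} (hp : p.val = a) :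
    (cyc m a b p).val = b := by
  rw [cyc_val h1 h2]; unfold cfun; split_ifs <;> omega

lemma cyc_ge {m a b : ℕ} (h1 : a ≤ b) (h2 : b < m) {p : Fin m} (hp : a ≤ p.val) :
    a ≤ (cyc m a b p).val := by
  rw [cyc_val h1 h2]; unfold cfun; split_ifs <;> omega

lemma cyc_shift {m a b : ℕ} (h1 : a ≤ b) (h2 : b < m) (p : Fin m) :
    p.val ≤ (cyc m a b p).val + 1 := by
  rw [cyc_val h1 h2]; unfold cfun; split_ifs <;> omega

lemma cyc_mem_iff {m a b : ℕ} (h1 : a ≤ b) (h2 : b < m) (p : Fin m) :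
    (a ≤ (cyc m a b p).val ∧ (cyc m a b p).val ≤ b) ↔ (a ≤ p.val ∧ p.val ≤ b) := by
  rw [cyc_val h1 h2]; unfold cfun; split_ifs <;> omega

def permOf (m : ℕ) : List ℕ → ℕ → Equiv.Perm (Fin m)
  | [], _ => 1
  | u :: rest, a => cyc m a u * permOf m rest (u + 1)

end PermSec

section Assemble

lemma unionBelow_eq_biUnion {m : ℕ} (H : Fin m → PGraph) (p : Fin m) :
    unionBelow H p = (Finset.univ.filter fun i : Fin m => i < p).biUnion H := rfl

lemma asm {m : ℕ} (G : Fin m → PGraph) (v : ℕ → ℕ) :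
    ∀ (LL : List ℕ) (a : ℕ),
    List.Pairwise (· < ·) LL →
    (∀ u ∈ LL, a ≤ u ∧ u < m) →
    (∀ u ∈ LL.head?, ∀ (hu : u < m) (ha : a < m),
        v u ≤ lam (ominus (G ⟨u, hu⟩) (unionBelow G ⟨a, ha⟩))) →
    List.Chain' (fun u w => ∀ (hw : w < m) (hu1 : u + 1 < m),
        v w ≤ lam (ominus (G ⟨w, hw⟩) (unionBelow G ⟨u + 1, hu1⟩))) LL →
    ∃ σ : Equiv.Perm (Fin m), IsShiftPerm σ ∧
      (∀ p : Fin m, p.val < a → σ p = p) ∧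
      (∀ p : Fin m, a ≤ p.val → a ≤ (σ p).val) ∧
      (LL.map v).sum ≤ ∑ p ∈ Finset.univ.filter (fun p : Fin m => a ≤ p.val),
          lam (ominus (G (σ p)) (unionBelow (fun j => G (σ j)) p)) := by
  intro LL
  induction LL with
  | nil =>
    intro a _ _ _ _
    refine ⟨1, fun j => by simp, fun p _ => rfl, fun p hp => hp, by simp⟩
  | cons u₀ rest ih =>
    intro a hpair hbnd hhead hchain
    have hau : a ≤ u₀ := (hbnd u₀ (by simp)).1
    have hum : u₀ < m := (hbnd u₀ (by simp)).2
    have ham : a < m := lt_of_le_of_lt hau hum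
    set a' := u₀ + 1 with ha'
    -- IH for rest
    have hbnd' : ∀ u ∈ rest, a' ≤ u ∧ u < m := by
      intro u hu
      refine ⟨?_, (hbnd u (by simp [hu])).2⟩
      have := (List.pairwise_cons.mp hpair).1 u hu
      omega
    have hhead' : ∀ u ∈ rest.head?, ∀ (hu : u < m) (ha : a' < m),
        v u ≤ lam (ominus (G ⟨u, hu⟩) (unionBelow G ⟨a', ha⟩)) := by
      intro u hu hum' ham'
      cases rest with
      | nil => simp at hu
      | cons w l2 =>
        simp only [List.head?_cons, Option.mem_def, Option.some.injEq] at hu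
        subst hu
        exact (List.isChain_cons_cons.mp hchain).1 hum' ham'
    have hchain' : List.Chain' (fun u w => ∀ (hw : w < m) (hu1 : u + 1 < m),
        v w ≤ lam (ominus (G ⟨w, hw⟩) (unionBelow G ⟨u + 1, hu1⟩))) rest :=
      hchain.tail
    obtain ⟨σ', hshift', hfix', hge', hsum'⟩ :=
      ih a' (List.pairwise_cons.mp hpair).2 hbnd' hhead' hchain'
    set c := cyc m a u₀ with hc
    refine ⟨c * σ', ?_, ?_, ?_, ?_⟩
    · -- shift perm
      intro p
      show p.val ≤ (c (σ' p)).val + 1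
      rcases lt_or_ge p.val a with h1 | h1
      · rw [hfix' p (by omega), cyc_fix_lt hau hum h1]; omega
      · rcases le_or_gt p.val u₀ with h2 | h2
        · rw [hfix' p (by omega)]
          exact cyc_shift hau hum p
        · have hge : a' ≤ (σ' p).val := hge' p (by omega)
          rw [cyc_fix_gt hau hum (by omega)]
          exact hshift' p
    · -- fix below a
      intro p hp
      show c (σ' p) = p
      rw [hfix' p (by omega), cyc_fix_lt hau hum hp]
    · -- ≥ a preserved
      intro p hp
      show a ≤ (c (σ' p)).val
      rcases le_or_gt p.val u₀ with h2 | h2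
      · rw [hfix' p (by omega)]
        exact cyc_ge hau hum hp
      · have hge : a' ≤ (σ' p).val := hge' p (by omega)
        rw [cyc_fix_gt hau hum (by omega)]
        omega
    · -- the sum bound
      set σ : Equiv.Perm (Fin m) := c * σ' with hσ
      have hσapp : ∀ p, σ p = c (σ' p) := fun p => rfl
      have hσfix : ∀ p : Fin m, p.val < a → σ p = p := by
        intro p hp
        rw [hσapp, hfix' p (by omega), cyc_fix_lt hau hum hp]
      set pa : Fin m := ⟨a, ham⟩ with hpa
      set pu : Fin m := ⟨u₀, hum⟩ with hpu
      have hS : insert pa (Finset.univ.filter fun p : Fin m => a' ≤ p.val) ⊆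
          Finset.univ.filter (fun p : Fin m => a ≤ p.val) := by
        intro q hq
        simp only [Finset.mem_insert, Finset.mem_filter, Finset.mem_univ, true_and] at hq ⊢
        rcases hq with rfl | hq
        · exact le_refl a
        · omega
      have hnotin : pa ∉ (Finset.univ.filter fun p : Fin m => a' ≤ p.val) := by
        simp only [Finset.mem_filter, Finset.mem_univ, true_and, hpa]
        omega
      calc ((u₀ :: rest).map v).sum = v u₀ + (rest.map v).sum := by simp
        _ ≤ lam (ominus (G (σ pa)) (unionBelow (fun j => G (σ j)) pa))
            + (rest.map v).sum := by
            -- head evaluation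
            gcongr
            have h1 : σ pa = pu := by
              apply Fin.ext
              rw [hσapp, hfix' pa (by simp [hpa]; omega)]
              exact cyc_apply_a hau hum rfl
            have h2 : unionBelow (fun j => G (σ j)) pa = unionBelow G pa := by
              rw [unionBelow_eq_biUnion, unionBelow_eq_biUnion]
              apply Finset.biUnion_congr rfl
              intro q hq
              simp only [Finset.mem_filter, Finset.mem_univ, true_and] at hq
              rw [hσfix q (by exact hq)]
            rw [h1, h2]
            exact hhead u₀ rfl hum ham
        _ ≤ lam (ominus (G (σ pa)) (unionBelow (fun j => G (σ j)) pa))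
            + ∑ p ∈ Finset.univ.filter (fun p : Fin m => a' ≤ p.val),
              lam (ominus (G (σ p)) (unionBelow (fun j => G (σ j)) p)) := by
            gcongr
            -- tail sums agree termwise with σ'
            have hterm : ∀ p ∈ Finset.univ.filter (fun p : Fin m => a' ≤ p.val),
                lam (ominus (G (σ' p)) (unionBelow (fun j => G (σ' j)) p)) =
                lam (ominus (G (σ p)) (unionBelow (fun j => G (σ j)) p)) := by
              intro p hp
              simp only [Finset.mem_filter, Finset.mem_univ, true_and] at hp
              have h1 : σ p = σ' p := by
                rw [hσapp]
                exact cyc_fix_gt hau hum (by have := hge' p hp; omega)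
              have h2 : unionBelow (fun j => G (σ j)) p = unionBelow (fun j => G (σ' j)) p := by
                rw [unionBelow_eq_biUnion, unionBelow_eq_biUnion]
                have e1 : ∀ (τ : Equiv.Perm (Fin m)),
                    (Finset.univ.filter fun i : Fin m => i < p).biUnion (fun j => G (τ j)) =
                    ((Finset.univ.filter fun i : Fin m => i < p).image τ).biUnion G := by
                  intro τ
                  rw [Finset.image_biUnion]
                rw [e1 σ, e1 σ']
                have e2 : (Finset.univ.filter fun i : Fin m => i < p).image σ =
                    (Finset.univ.filter fun i : Fin m => i < p).image σ' := by
                  have e3 : (Finset.univ.filter fun i : Fin m => i < p).image σ =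
                      ((Finset.univ.filter fun i : Fin m => i < p).image σ').image c := by
                    rw [Finset.image_image]
                    rfl
                  rw [e3]
                  -- show image c T = T for T := image σ' s
                  set T := (Finset.univ.filter fun i : Fin m => i < p).image σ' with hT
                  have hmemT : ∀ q : Fin m, a ≤ q.val → q.val ≤ u₀ → q ∈ T := by
                    intro q hq1 hq2
                    rw [hT, Finset.mem_image]
                    refine ⟨q, ?_, hfix' q (by omega)⟩
                    simp only [Finset.mem_filter, Finset.mem_univ, true_and]
                    show q < p
                    have : q.val < p.val := by omega
                    exact this
                  ext q
                  constructor
                  · rw [Finset.mem_image]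
                    rintro ⟨y, hyT, rfl⟩
                    rcases le_or_gt a y.val with hy1 | hy1
                    · rcases le_or_gt y.val u₀ with hy2 | hy2
                      · have := (cyc_mem_iff hau hum y).mpr ⟨hy1, hy2⟩
                        exact hmemT _ this.1 this.2
                      · rwa [cyc_fix_gt hau hum hy2]
                    · rwa [cyc_fix_lt hau hum hy1]
                  · intro hq
                    rw [Finset.mem_image]
                    rcases le_or_gt a q.val with hq1 | hq1
                    · rcases le_or_gt q.val u₀ with hq2 | hq2
                      · refine ⟨c.symm q, ?_, c.apply_symm_apply q⟩
                        have hcc : (c (c.symm q)).val = q.val := by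
                          rw [c.apply_symm_apply]
                        have := (cyc_mem_iff hau hum (c.symm q))
                        rw [show cyc m a u₀ (c.symm q) = c (c.symm q) from rfl] at this
                        rw [hcc] at this
                        have h4 := this.mp ⟨hq1, hq2⟩
                        exact hmemT _ h4.1 h4.2
                      · exact ⟨q, hq, cyc_fix_gt hau hum hq2⟩
                    · exact ⟨q, hq, cyc_fix_lt hau hum hq1⟩
                rw [e2]
              rw [h1, h2]
            calc (rest.map v).sum ≤ ∑ p ∈ Finset.univ.filter (fun p : Fin m => a' ≤ p.val),
                lam (ominus (G (σ' p)) (unionBelow (fun j => G (σ' j)) p)) := hsum'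
              _ = _ := Finset.sum_congr rfl hterm
        _ = ∑ p ∈ insert pa (Finset.univ.filter fun p : Fin m => a' ≤ p.val),
              lam (ominus (G (σ p)) (unionBelow (fun j => G (σ j)) p)) := by
            rw [Finset.sum_insert hnotin]
        _ ≤ _ := Finset.sum_le_sum_of_subset hS

end Assemble

section Greedy

lemma greedy (D : Finset ℕ) (c ρ : ℕ → ℤ) (β : ℤ)
    (hcρ : ∀ j ∈ D, c j ≤ ρ j) (hρβ : ∀ j ∈ D, ρ j ≤ β)
    (hmono : ∀ j ∈ D, ∀ j' ∈ D, ρ j < ρ j' → j < j') :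
    ∀ (n : ℕ) (x : ℤ), β - x ≤ n → x ≤ β →
    (∀ y : ℤ, x ≤ y → y ≤ β → ∃ j ∈ D, c j ≤ y ∧ y ≤ ρ j) →
    ∃ LA LB : List ℕ,
      (∀ j ∈ LA, j ∈ D) ∧ (∀ j ∈ LB, j ∈ D) ∧
      List.Chain' (fun j j' => j < j' ∧ ρ j + 2 ≤ c j') LA ∧
      List.Chain' (fun j j' => j < j' ∧ ρ j + 2 ≤ c j') LB ∧
      β - x + 1 ≤ (LA.map fun j => ρ j - c j + 1).sum + (LB.map fun j => ρ j - c j + 1).sum ∧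
      (∃ jA tlA, LA = jA :: tlA ∧ c jA ≤ x ∧ x ≤ ρ jA ∧ (∀ j ∈ D, c j ≤ x → ρ j ≤ ρ jA) ∧
        (∀ jB ∈ LB.head?, ρ jA + 1 ≤ ρ jB)) := by
  intro n
  induction n with
  | zero =>
    intro x hn hxβ hcov
    obtain ⟨j0, hj0D, hj0c, hj0ρ⟩ := hcov x le_rfl hxβ
    obtain ⟨j₁, hj₁S, hj₁max⟩ := (D.filter fun j => c j ≤ x).exists_max_image ρ
      ⟨j0, Finset.mem_filter.mpr ⟨hj0D, hj0c⟩⟩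
    rw [Finset.mem_filter] at hj₁S
    have hxρ1 : x ≤ ρ j₁ := le_trans hj0ρ (hj₁max j0 (Finset.mem_filter.mpr ⟨hj0D, hj0c⟩))
    have hβ1 : β ≤ ρ j₁ := by
      have : x = β := by omega
      omega
    refine ⟨[j₁], [], ?_, by simp, List.isChain_singleton _, List.isChain_nil, ?_, ?_⟩
    · intro j hj; simp at hj; subst hj; exact hj₁S.1
    · simp; omega
    · refine ⟨j₁, [], rfl, hj₁S.2, hxρ1, ?_, by simp⟩
      intro j hjD hjc
      exact hj₁max j (Finset.mem_filter.mpr ⟨hjD, hjc⟩)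
  | succ n ihn =>
    intro x hn hxβ hcov
    obtain ⟨j0, hj0D, hj0c, hj0ρ⟩ := hcov x le_rfl hxβ
    obtain ⟨j₁, hj₁S, hj₁max'⟩ := (D.filter fun j => c j ≤ x).exists_max_image ρ
      ⟨j0, Finset.mem_filter.mpr ⟨hj0D, hj0c⟩⟩
    rw [Finset.mem_filter] at hj₁S
    have hj₁max : ∀ j ∈ D, c j ≤ x → ρ j ≤ ρ j₁ := fun j hjD hjc =>
      hj₁max' j (Finset.mem_filter.mpr ⟨hjD, hjc⟩)
    have hxρ1 : x ≤ ρ j₁ := le_trans hj0ρ (hj₁max j0 hj0D hj0c)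
    by_cases hβ1 : β ≤ ρ j₁
    · refine ⟨[j₁], [], ?_, by simp, List.isChain_singleton _, List.isChain_nil, ?_, ?_⟩
      · intro j hj; simp at hj; subst hj; exact hj₁S.1
      · simp; have := hj₁S.2; omega
      · exact ⟨j₁, [], rfl, hj₁S.2, hxρ1, hj₁max, by simp⟩
    · push_neg at hβ1
      set x₂ := ρ j₁ + 1 with hx₂
      have hx₂β : x₂ ≤ β := by omega
      obtain ⟨j0', hj0'D, hj0'c, hj0'ρ⟩ := hcov x₂ (by omega) hx₂β
      obtain ⟨j₂, hj₂S, hj₂max'⟩ := (D.filter fun j => c j ≤ x₂).exists_max_image ρ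
        ⟨j0', Finset.mem_filter.mpr ⟨hj0'D, hj0'c⟩⟩
      rw [Finset.mem_filter] at hj₂S
      have hj₂max : ∀ j ∈ D, c j ≤ x₂ → ρ j ≤ ρ j₂ := fun j hjD hjc =>
        hj₂max' j (Finset.mem_filter.mpr ⟨hjD, hjc⟩)
      have hx₂ρ2 : x₂ ≤ ρ j₂ := le_trans hj0'ρ (hj₂max j0' hj0'D hj0'c)
      by_cases hβ2 : β ≤ ρ j₂
      · refine ⟨[j₁], [j₂], ?_, ?_, List.isChain_singleton _, List.isChain_singleton _, ?_, ?_⟩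
        · intro j hj; simp at hj; subst hj; exact hj₁S.1
        · intro j hj; simp at hj; subst hj; exact hj₂S.1
        · simp; have := hj₁S.2; have := hj₂S.2; omega
        · refine ⟨j₁, [], rfl, hj₁S.2, hxρ1, hj₁max, ?_⟩
          intro jB hjB; simp at hjB; subst hjB; omega
      · push_neg at hβ2
        set x' := ρ j₂ + 1 with hx'
        obtain ⟨LA', LB', hLA'D, hLB'D, hchA', hchB', hsum', jA', tlA', hLA'eq, hcA', hρA',
            hmaxA', hBhead'⟩ := ihn x' (by omega) (by omega) (fun y hy1 hy2 => hcov y (by omega) hy2)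
        have hsep1 : ρ j₁ + 2 ≤ c jA' := by
          by_contra hcon
          push_neg at hcon
          have hjA'D : jA' ∈ D := hLA'D jA' (by rw [hLA'eq]; simp)
          have := hj₂max jA' hjA'D (by omega)
          omega
        have hlt1 : j₁ < jA' := by
          apply hmono j₁ hj₁S.1 jA' (hLA'D jA' (by rw [hLA'eq]; simp))
          omega
        refine ⟨j₁ :: LA', j₂ :: LB', ?_, ?_, ?_, ?_, ?_, ?_⟩
        · intro j hj
          rcases List.mem_cons.mp hj with rfl | hj
          · exact hj₁S.1
          · exact hLA'D j hj
        · intro j hj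
          rcases List.mem_cons.mp hj with rfl | hj
          · exact hj₂S.1
          · exact hLB'D j hj
        · rw [hLA'eq]
          rw [hLA'eq] at hchA'
          exact List.isChain_cons_cons.mpr ⟨⟨hlt1, hsep1⟩, hchA'⟩
        · cases LB' with
          | nil => exact List.isChain_singleton _
          | cons jB' tlB' =>
            have hρB' : ρ jA' + 1 ≤ ρ jB' := hBhead' jB' rfl
            have hjB'D : jB' ∈ D := hLB'D jB' (by simp)
            have hsep2 : ρ j₂ + 2 ≤ c jB' := by
              by_contra hcon
              push_neg at hcon
              have := hmaxA' jB' hjB'D (by omega)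
              omega
            have hlt2 : j₂ < jB' := by
              apply hmono j₂ hj₂S.1 jB' hjB'D
              omega
            exact List.isChain_cons_cons.mpr ⟨⟨hlt2, hsep2⟩, hchB'⟩
        · simp only [List.map_cons, List.sum_cons]
          have h1 := hj₁S.2
          have h2 := hj₂S.2
          omega
        · refine ⟨j₁, LA', rfl, hj₁S.2, hxρ1, hj₁max, ?_⟩
          intro jB hjB
          simp only [List.head?_cons, Option.mem_def, Option.some.injEq] at hjB
          subst hjB
          omega

end Greedy

section OneSided

lemma le_maxD {s : Finset ℤ} {x : ℤ} (hx : x ∈ s) : x ≤ WithBot.unbotD 0 s.max := by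
  obtain ⟨v, hv⟩ := Finset.max_of_mem hx
  have h1 : (x : WithBot ℤ) ≤ s.max := Finset.le_max hx
  rw [hv] at h1 ⊢
  exact_mod_cast h1

lemma maxD_mem {s : Finset ℤ} (h : s.Nonempty) : WithBot.unbotD 0 s.max ∈ s := by
  obtain ⟨v, hv⟩ := Finset.max_of_mem h.choose_spec
  rw [hv]
  exact Finset.mem_of_max hv

lemma maxD_empty : WithBot.unbotD 0 (∅ : Finset ℤ).max = 0 := by simp

lemma minD_mem {s : Finset ℤ} (h : s.Nonempty) : WithTop.untopD 0 s.min ∈ s := by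
  obtain ⟨v, hv⟩ := Finset.min_of_mem h.choose_spec
  rw [hv]
  exact Finset.mem_of_min hv

lemma minD_le {s : Finset ℤ} {x : ℤ} (hx : x ∈ s) : WithTop.untopD 0 s.min ≤ x := by
  obtain ⟨v, hv⟩ := Finset.min_of_mem hx
  have h1 : s.min ≤ (x : WithTop ℤ) := Finset.min_le hx
  rw [hv] at h1 ⊢
  exact_mod_cast h1

lemma chain'_of_mem_imp {α : Type} {R S : α → α → Prop} {P : α → Prop} {L : List α}
    (hc : List.Chain' R L) (hm : ∀ a ∈ L, P a)
    (himp : ∀ a b, P a → P b → R a b → S a b) : List.Chain' S L := by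
  induction L with
  | nil => exact List.isChain_nil
  | cons a L ih =>
    cases L with
    | nil => exact List.isChain_singleton _
    | cons b L2 =>
      unfold List.Chain' at hc ⊢
      rw [List.isChain_cons_cons] at hc ⊢
      exact ⟨himp a b (hm a (by simp)) (hm b (by simp)) hc.1,
        ih hc.2 (fun x hx => hm x (List.mem_cons_of_mem _ hx))⟩

lemma list_sum_le_cast (v : ℕ → ℕ) (fz : ℕ → ℤ) :
    ∀ L : List ℕ, (∀ j ∈ L, fz j ≤ (v j : ℤ)) → (L.map fz).sum ≤ ((L.map v).sum : ℤ) := by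
  intro L
  induction L with
  | nil => simp
  | cons a L ih =>
    intro h
    simp only [List.map_cons, List.sum_cons]
    have h1 := h a (by simp)
    have h2 := ih (fun j hj => h j (by simp [hj]))
    have h3 : ((v a + (L.map v).sum : ℕ) : ℤ) = (v a : ℤ) + ((L.map v).sum : ℤ) := by
      push_cast; ring
    rw [h3]
    exact add_le_add h1 h2

lemma one_sided {m : ℕ} (k : ℕ) (hk : 1 ≤ k) (G : Fin m → PGraph)
    (hcov : Finset.univ.biUnion G = pathk k)
    (t : Fin m) (l r : ℤ)
    (hGt : G t = Finset.Icc l r) (hlr : l ≤ r)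
    (hempty : ∀ j : Fin m, j < t → G j = ∅)
    (h2 : ∀ j : Fin m, j ≠ t → ominus (G j) (unionBelow G j) = ∅) :
    ∃ σ : Equiv.Perm (Fin m), IsShiftPerm σ ∧
      (k : ℤ) - l + 1 ≤ 2 * (lvec (seqList fun j => G (σ j)) : ℤ) := by
  classical
  set G! : ℕ → PGraph := fun n => if h : n < m then G ⟨n, h⟩ else ∅ with hG!
  set UB : ℕ → PGraph := fun n => (Finset.range n).biUnion G! with hUB
  set Mx : ℕ → ℤ := fun n => WithBot.unbotD 0 (UB n).max with hMx
  set ρ : ℕ → ℤ := fun n => Mx (n + 1) with hρdef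
  set cc : ℕ → ℤ := fun n => WithTop.untopD 0 (comp (G! n) (ρ n)).min with hccdef
  set D : Finset ℕ :=
    (Finset.range m).filter (fun n => t.val ≤ n ∧ (n = t.val ∨ Mx n < Mx (n + 1))) with hD
  have hG!eq : ∀ (n : ℕ) (hn : n < m), G! n = G ⟨n, hn⟩ := by
    intro n hn; show (if h : n < m then G ⟨n, h⟩ else ∅) = G ⟨n, hn⟩; rw [dif_pos hn]
  have hG!t : G! t.val = Finset.Icc l r := by
    rw [hG!eq t.val t.isLt, Fin.eta]; exact hGt
  have hUBeq : ∀ n, UB n = (Finset.range n).biUnion G! := fun n => rfl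
  have hMxeq : ∀ n, Mx n = WithBot.unbotD 0 (UB n).max := fun n => rfl
  have hρeq : ∀ n, ρ n = Mx (n + 1) := fun n => rfl
  have hcceq : ∀ n, cc n = WithTop.untopD 0 (comp (G! n) (ρ n)).min := fun n => rfl
  have hpath : pathk k = Finset.Icc 1 (k : ℤ) := rfl
  -- unionBelow vs UB
  have h_unionBelow : ∀ (n : ℕ) (hn : n < m), unionBelow G ⟨n, hn⟩ = UB n := by
    intro jv hjv
    set j : Fin m := ⟨jv, hjv⟩ with hj
    ext x
    rw [unionBelow_eq_biUnion, hUBeq]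
    simp only [Finset.mem_biUnion, Finset.mem_filter, Finset.mem_univ, true_and,
      Finset.mem_range]
    constructor
    · rintro ⟨i, hi, hx⟩
      refine ⟨i.val, hi, by rwa [hG!eq i.val i.isLt, Fin.eta]⟩
    · rintro ⟨nn, hnn, hx⟩
      have hnm : nn < m := lt_trans hnn hjv
      exact ⟨⟨nn, hnm⟩, hnn, by rwa [hG!eq nn hnm] at hx⟩
  have hUBm : UB m = Finset.Icc 1 (k : ℤ) := by
    rw [hUBeq]
    ext x
    simp only [Finset.mem_biUnion, Finset.mem_range]
    constructor
    · rintro ⟨nn, hnn, hx⟩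
      rw [hG!eq nn hnn] at hx
      have hx2 : x ∈ Finset.univ.biUnion G :=
        Finset.mem_biUnion.mpr ⟨⟨nn, hnn⟩, Finset.mem_univ _, hx⟩
      rw [hcov, hpath] at hx2
      exact hx2
    · intro hx
      rw [← hpath, ← hcov] at hx
      obtain ⟨i, _, hx⟩ := Finset.mem_biUnion.mp hx
      exact ⟨i.val, i.isLt, by rwa [hG!eq i.val i.isLt, Fin.eta]⟩
  have hUBsub : ∀ n, UB n ⊆ Finset.Icc 1 (k : ℤ) := by
    intro n x hx
    rw [hUBeq] at hx
    obtain ⟨nn, _, hx⟩ := Finset.mem_biUnion.mp hx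
    by_cases hnm : nn < m
    · rw [← hUBm, hUBeq]
      exact Finset.mem_biUnion.mpr ⟨nn, Finset.mem_range.mpr hnm, hx⟩
    · rw [hG!] at hx
      simp only [hnm, dif_neg] at hx
      exact absurd hx (Finset.notMem_empty x)
  have hMx0 : ∀ n, 0 ≤ Mx n := by
    intro n
    rcases (UB n).eq_empty_or_nonempty with he | hne
    · rw [hMxeq, he, maxD_empty]
    · have h := hUBsub n (maxD_mem hne)
      rw [Finset.mem_Icc] at h
      rw [hMxeq]
      omega
  have hMxk : ∀ n, Mx n ≤ (k : ℤ) := by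
    intro n
    rcases (UB n).eq_empty_or_nonempty with he | hne
    · rw [hMxeq, he, maxD_empty]
      exact_mod_cast Nat.zero_le k
    · have h := hUBsub n (maxD_mem hne)
      rw [Finset.mem_Icc] at h
      rw [hMxeq]
      omega
  have hUBmono : ∀ n n', n ≤ n' → UB n ⊆ UB n' := by
    intro n n' h
    rw [hUBeq, hUBeq]
    exact Finset.biUnion_subset_biUnion_of_subset_left _ (Finset.range_subset_range.mpr h)
  have hMxmono : ∀ n n', n ≤ n' → Mx n ≤ Mx n' := by
    intro n n' h
    rcases (UB n).eq_empty_or_nonempty with he | hne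
    · rw [hMxeq, he, maxD_empty]
      exact hMx0 n'
    · exact le_maxD (hUBmono n n' h (maxD_mem hne))
  have hUBle_t : ∀ n, n ≤ t.val → UB n = ∅ := by
    intro n hn
    rw [hUBeq]
    apply Finset.eq_empty_of_forall_notMem
    intro x hx
    obtain ⟨nn, hnn, hxg⟩ := Finset.mem_biUnion.mp hx
    rw [Finset.mem_range] at hnn
    have hnm : nn < m := lt_of_lt_of_le (lt_of_lt_of_le hnn hn) t.isLt.le
    rw [hG!eq nn hnm] at hxg
    rw [hempty ⟨nn, hnm⟩ (by simp only [Fin.lt_def]; omega)] at hxg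
    exact absurd hxg (Finset.notMem_empty x)
  have hUBsucc : ∀ n, UB (n + 1) = G! n ∪ UB n := by
    intro n
    rw [hUBeq, hUBeq, Finset.range_add_one, Finset.biUnion_insert]
  have hUBt1 : UB (t.val + 1) = Finset.Icc l r := by
    rw [hUBsucc, hUBle_t t.val le_rfl, Finset.union_empty, hG!t]
  have hMxt1 : Mx (t.val + 1) = r := by
    rw [hMxeq, hUBt1]
    refine le_antisymm ?_ (le_maxD (Finset.mem_Icc.mpr ⟨hlr, le_refl r⟩))
    have h := maxD_mem (Finset.nonempty_Icc.mpr hlr)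
    rw [Finset.mem_Icc] at h
    exact h.2
  have hMxm : Mx m = (k : ℤ) := by
    have hne : (Finset.Icc 1 (k : ℤ)).Nonempty := Finset.nonempty_Icc.mpr (by exact_mod_cast hk)
    rw [hMxeq, hUBm]
    refine le_antisymm ?_ (le_maxD (Finset.mem_Icc.mpr ⟨by exact_mod_cast hk, le_refl _⟩))
    have h := maxD_mem hne
    rw [Finset.mem_Icc] at h
    exact h.2
  have hlk : 1 ≤ l ∧ r ≤ (k : ℤ) := by
    have hmem : l ∈ UB (t.val + 1) := by rw [hUBt1]; exact Finset.mem_Icc.mpr ⟨le_refl l, hlr⟩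
    have hmem2 : r ∈ UB (t.val + 1) := by rw [hUBt1]; exact Finset.mem_Icc.mpr ⟨hlr, le_refl r⟩
    have hh1 := hUBsub _ hmem
    have hh2 := hUBsub _ hmem2
    rw [Finset.mem_Icc] at hh1 hh2
    exact ⟨hh1.1, hh2.2⟩
  have hDmem : ∀ n ∈ D, n < m ∧ t.val ≤ n ∧ (n = t.val ∨ Mx n < Mx (n + 1)) := by
    intro n hn
    rw [hD, Finset.mem_filter, Finset.mem_range] at hn
    exact ⟨hn.1, hn.2.1, hn.2.2⟩
  have htD : t.val ∈ D := by
    rw [hD, Finset.mem_filter, Finset.mem_range]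
    exact ⟨t.isLt, le_refl _, Or.inl rfl⟩
  have hρmem : ∀ n ∈ D, ρ n ∈ G! n ∧ ∀ g ∈ G! n, g ≤ ρ n := by
    intro n hn
    obtain ⟨hnm, hnt, hgrow⟩ := hDmem n hn
    have hsub : G! n ⊆ UB (n + 1) := by
      intro g hg
      rw [hUBsucc]
      exact Finset.mem_union_left _ hg
    have hle : ∀ g ∈ G! n, g ≤ ρ n := fun g hg => le_maxD (hsub hg)
    refine ⟨?_, hle⟩
    rcases hgrow with rfl | hgr
    · rw [hG!t]
      have hρt : ρ t.val = r := hMxt1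
      rw [hρt]
      exact Finset.mem_Icc.mpr ⟨hlr, le_refl r⟩
    · have hne : (UB (n + 1)).Nonempty := by
        by_contra hcon
        rw [Finset.not_nonempty_iff_eq_empty] at hcon
        have h0 : Mx (n + 1) = 0 := by rw [hMxeq, hcon, maxD_empty]
        have := hMx0 n
        omega
      have hmem : Mx (n + 1) ∈ UB (n + 1) := maxD_mem hne
      rw [hUBsucc, Finset.mem_union] at hmem
      rcases hmem with hmem2 | hmem2
      · exact hmem2
      · exfalso
        have hle2 : Mx (n + 1) ≤ Mx n := le_maxD hmem2
        omega
  have hKn : ∀ n ∈ D, comp (G! n) (ρ n) = Finset.Icc (cc n) (ρ n) ∧ cc n ≤ ρ n := by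
    intro n hn
    obtain ⟨hρG, hρmax⟩ := hρmem n hn
    have hne : (comp (G! n) (ρ n)).Nonempty := ⟨ρ n, self_mem_comp hρG⟩
    have hc1 : cc n ∈ comp (G! n) (ρ n) := by rw [hcceq]; exact minD_mem hne
    have hc2 : ∀ y ∈ comp (G! n) (ρ n), cc n ≤ y := by
      intro y hy; rw [hcceq]; exact minD_le hy
    have hcle : cc n ≤ ρ n := hc2 _ (self_mem_comp hρG)
    refine ⟨?_, hcle⟩
    ext x
    simp only [Finset.mem_Icc]
    constructor
    · intro hx
      exact ⟨hc2 x hx, hρmax x (comp_subset _ _ hx)⟩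
    · rintro ⟨hx1, hx2⟩
      exact mem_comp_trans hc1 (by simp only [Finset.mem_Icc]; omega)
  have hcc1 : ∀ n ∈ D, n ≠ t.val → cc n ≤ Mx n + 1 := by
    intro n hn hnt
    obtain ⟨hnm, _, _⟩ := hDmem n hn
    by_contra hcon
    push_neg at hcon
    have hnet : (⟨n, hnm⟩ : Fin m) ≠ t := by
      intro he
      apply hnt
      rw [← he]
    have homi : ominus (G ⟨n, hnm⟩) (unionBelow G ⟨n, hnm⟩) = ∅ := h2 ⟨n, hnm⟩ hnet
    have hne : ρ n ∈ ominus (G! n) (UB n) := by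
      rw [mem_ominus]
      refine ⟨(hρmem n hn).1, ?_⟩
      intro j hj f hf
      rw [(hKn n hn).1, Finset.mem_Icc] at hj
      have hfle : f ≤ Mx n := le_maxD hf
      omega
    rw [hG!eq n hnm] at hne
    rw [← h_unionBelow n hnm] at hne
    rw [homi] at hne
    exact absurd hne (Finset.notMem_empty _)
  have hρt : ρ t.val = r := hMxt1
  have hcct : cc t.val = l := by
    have h1 := (hKn t.val htD).1
    have hcomp : comp (G! t.val) (ρ t.val) = Finset.Icc l r := by
      rw [hG!t, hρt]
      ext x
      rw [mem_comp]
      simp only [Finset.mem_Icc]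
      constructor
      · intro hx; exact hx.1
      · intro hx
        refine ⟨hx, fun l' hl' => ?_⟩
        omega
    rw [hcomp, hρt] at h1
    have hmem1 : l ∈ Finset.Icc (cc t.val) r := by
      rw [← h1]; exact Finset.mem_Icc.mpr ⟨le_refl l, hlr⟩
    have hmem2 : cc t.val ∈ Finset.Icc l r := by
      rw [h1]
      rw [Finset.mem_Icc] at hmem1 ⊢
      exact ⟨le_refl _, by omega⟩
    rw [Finset.mem_Icc] at hmem1 hmem2
    omega
  have hcover : ∀ y : ℤ, l ≤ y → y ≤ (k : ℤ) → ∃ n ∈ D, cc n ≤ y ∧ y ≤ ρ n := by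
    intro y hy1 hy2
    rcases le_or_gt y r with hyr | hyr
    · exact ⟨t.val, htD, by rw [hcct]; exact hy1, by rw [hρt]; exact hyr⟩
    · have hex : ∃ n, y ≤ Mx n := ⟨m, by rw [hMxm]; exact hy2⟩
      have hfind : y ≤ Mx (Nat.find hex) := Nat.find_spec hex
      have hn₀le : Nat.find hex ≤ m := Nat.find_le (by rw [hMxm]; exact hy2)
      have hMx00 : Mx 0 = 0 := by
        have h0 : UB 0 = ∅ := by rw [hUBeq]; simp
        rw [hMxeq, h0, maxD_empty]
      have hn₀pos : Nat.find hex ≠ 0 := by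
        intro hcon
        rw [hcon, hMx00] at hfind
        have := hlk.1
        omega
      obtain ⟨n', hsucc⟩ : ∃ n', Nat.find hex = n' + 1 := ⟨Nat.find hex - 1, by omega⟩
      rw [hsucc] at hfind
      have hmin : ¬ y ≤ Mx n' := Nat.find_min hex (by omega)
      push_neg at hmin
      have htn' : t.val ≤ n' := by
        by_contra hcon
        push_neg at hcon
        have hmm : Mx (n' + 1) ≤ Mx (t.val + 1) := hMxmono _ _ (by omega)
        rw [hMxt1] at hmm
        omega
      have hn'ne : n' ≠ t.val := by
        intro hcon
        rw [hcon, hMxt1] at hfind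
        omega
      have hn'D : n' ∈ D := by
        rw [hD, Finset.mem_filter, Finset.mem_range]
        exact ⟨by omega, htn', Or.inr (by omega)⟩
      refine ⟨n', hn'D, ?_, hfind⟩
      have := hcc1 n' hn'D hn'ne
      omega
  have hmonoD : ∀ n ∈ D, ∀ n' ∈ D, ρ n < ρ n' → n < n' := by
    intro n _ n' _ hlt
    by_contra hcon
    push_neg at hcon
    have hmm := hMxmono (n' + 1) (n + 1) (by omega)
    rw [hρeq, hρeq] at hlt
    omega
  have hρβ : ∀ n ∈ D, ρ n ≤ (k : ℤ) := fun n _ => hMxk (n + 1)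
  have hcρ : ∀ n ∈ D, cc n ≤ ρ n := fun n hn => (hKn n hn).2
  have hlek : l ≤ (k : ℤ) := le_trans hlr hlk.2
  obtain ⟨LA, LB, hLAD, hLBD, hchA, hchB, hsums, _⟩ :=
    greedy D cc ρ (k : ℤ) hcρ hρβ hmonoD ((k : ℤ) - l).toNat l (by omega) hlek hcover
  set fz : ℕ → ℤ := fun j => ρ j - cc j + 1 with hfz
  set L : List ℕ := if (LB.map fz).sum ≤ (LA.map fz).sum then LA else LB with hL
  have hLD : ∀ j ∈ L, j ∈ D := by
    rw [hL]; split_ifs with h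
    · exact hLAD
    · exact hLBD
  have hchL : List.Chain' (fun j j' => j < j' ∧ ρ j + 2 ≤ cc j') L := by
    rw [hL]; split_ifs with h
    · exact hchA
    · exact hchB
  have hLsum : (k : ℤ) - l + 1 ≤ 2 * (L.map fz).sum := by
    rw [hL]; split_ifs with h
    · omega
    · omega
  set v : ℕ → ℕ := fun n => (Finset.Icc (cc n) (ρ n)).card with hv
  have hfzv : ∀ j ∈ L, fz j ≤ (v j : ℤ) := by
    intro j hj
    show ρ j - cc j + 1 ≤ ((Finset.Icc (cc j) (ρ j)).card : ℤ)
    rw [Int.card_Icc]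
    have := hcρ j (hLD j hj)
    omega
  have hchlt : List.Chain' (fun a b : ℕ => a < b) L := hchL.imp (fun a b h => h.1)
  have hpair : List.Pairwise (· < ·) L := List.isChain_iff_pairwise.mp hchlt
  have hbnd : ∀ u ∈ L, 0 ≤ u ∧ u < m := fun u hu => ⟨Nat.zero_le u, (hDmem u (hLD u hu)).1⟩
  have hhead : ∀ u ∈ L.head?, ∀ (hu : u < m) (ha : 0 < m),
      v u ≤ lam (ominus (G ⟨u, hu⟩) (unionBelow G ⟨0, ha⟩)) := by
    intro u hu hum h0m
    have huL : u ∈ L := List.mem_of_mem_head? hu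
    have huD := hLD u huL
    have hub0 : unionBelow G ⟨0, h0m⟩ = ∅ := by
      rw [h_unionBelow 0 h0m]
      exact hUBle_t 0 (Nat.zero_le _)
    rw [hub0, ominus_empty, ← hG!eq u hum]
    show (Finset.Icc (cc u) (ρ u)).card ≤ lam (G! u)
    rw [← (hKn u huD).1]
    exact card_comp_le_lam (hρmem u huD).1
  have hchainAsm : List.Chain' (fun u w => ∀ (hw : w < m) (hu1 : u + 1 < m),
      v w ≤ lam (ominus (G ⟨w, hw⟩) (unionBelow G ⟨u + 1, hu1⟩))) L := by
    apply chain'_of_mem_imp hchL (fun j hj => hLD j hj)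
    intro u w huD hwD hrel hw hu1
    rw [h_unionBelow (u + 1) hu1, ← hG!eq w hw]
    have hKw := (hKn w hwD).1
    have hsurv : (comp (G! w) (ρ w)).card ≤ lam (ominus (G! w) (UB (u + 1))) := by
      apply surv (hρmem w hwD).1
      intro x hx f hf
      rw [hKw, Finset.mem_Icc] at hx
      have hce : ρ u + 2 ≤ cc w := hrel.2
      have hfle : f ≤ Mx (u + 1) := le_maxD hf
      rw [hρeq] at hce
      omega
    show (Finset.Icc (cc w) (ρ w)).card ≤ lam (ominus (G! w) (UB (u + 1)))
    rw [← hKw]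
    exact hsurv
  obtain ⟨σ, hshift, _, _, hsum⟩ := asm G v L 0 hpair hbnd hhead hchainAsm
  refine ⟨σ, hshift, ?_⟩
  have hfilter : (Finset.univ.filter fun p : Fin m => 0 ≤ p.val) = Finset.univ :=
    Finset.filter_true_of_mem (fun p _ => Nat.zero_le _)
  rw [hfilter] at hsum
  have hlv : lvec (seqList fun j => G (σ j)) =
      ∑ p : Fin m, lam (ominus (G (σ p)) (unionBelow (fun j => G (σ j)) p)) :=
    lvec_seqList _
  have hcast := list_sum_le_cast v fz L hfzv
  have hfinal : (L.map v).sum ≤ lvec (seqList fun j => G (σ j)) := by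
    rw [hlv]; exact hsum
  have hfinal2 : ((L.map v).sum : ℤ) ≤ (lvec (seqList fun j => G (σ j)) : ℤ) := by
    exact_mod_cast hfinal
  omega

end OneSided

section Reflection

variable (s : ℤ)

lemma refl_mem (F : PGraph) (x : ℤ) : x ∈ F.image (fun z => s - z) ↔ s - x ∈ F := by
  rw [Finset.mem_image]
  constructor
  · rintro ⟨a, ha, rfl⟩
    have he : s - (s - a) = a := by ring
    rwa [he]
  · intro h
    exact ⟨s - x, h, by ring⟩

lemma refl_inj : Function.Injective (fun z : ℤ => s - z) := by
  intro a b h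
  simp only at h
  omega

lemma comp_image (G : PGraph) (x : ℤ) :
    comp (G.image (fun z => s - z)) x = (comp G (s - x)).image (fun z => s - z) := by
  ext y
  rw [refl_mem, mem_comp, mem_comp, refl_mem]
  constructor
  · rintro ⟨h1, h2⟩
    refine ⟨h1, fun l hl => ?_⟩
    simp only [Finset.mem_Icc] at hl
    have hmem : s - l ∈ Finset.Icc (min x y) (max x y) := by
      simp only [Finset.mem_Icc]; omega
    have := h2 (s - l) hmem
    rw [refl_mem] at this
    have he : s - (s - l) = l := by ring
    rwa [he] at this
  · rintro ⟨h1, h2⟩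
    refine ⟨h1, fun l hl => ?_⟩
    simp only [Finset.mem_Icc] at hl
    rw [refl_mem]
    apply h2
    simp only [Finset.mem_Icc]
    omega

lemma ominus_image (G F : PGraph) :
    ominus (G.image (fun z => s - z)) (F.image (fun z => s - z)) =
      (ominus G F).image (fun z => s - z) := by
  ext y
  rw [refl_mem, mem_ominus, mem_ominus, refl_mem]
  constructor
  · rintro ⟨h1, h2⟩
    refine ⟨h1, fun j hj f hf => ?_⟩
    have hj' : s - j ∈ comp (G.image (fun z => s - z)) y := by
      rw [comp_image]
      rw [refl_mem]
      have he : s - (s - j) = j := by ring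
      rwa [he]
    have hf' : s - f ∈ F.image (fun z => s - z) := by
      rw [refl_mem]
      have he : s - (s - f) = f := by ring
      rwa [he]
    have := h2 (s - j) hj' (s - f) hf'
    have he : (s - j - (s - f)) = -(j - f) := by ring
    rw [he, Int.natAbs_neg] at this
    exact this
  · rintro ⟨h1, h2⟩
    refine ⟨h1, fun j hj f hf => ?_⟩
    rw [comp_image, refl_mem] at hj
    rw [refl_mem] at hf
    have := h2 (s - j) hj (s - f) hf
    have he : (s - j - (s - f)) = -(j - f) := by ring
    rw [he, Int.natAbs_neg] at this
    exact this

lemma lam_image (G : PGraph) : lam (G.image (fun z => s - z)) = lam G := by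
  show (G.image (fun z => s - z)).sup _ = G.sup _
  rw [Finset.sup_image]
  apply Finset.sup_congr rfl
  intro i hi
  show (comp (G.image (fun z => s - z)) (s - i)).card = (comp G i).card
  rw [comp_image]
  have he : s - (s - i) = i := by ring
  rw [he]
  exact Finset.card_image_of_injective _ (refl_inj s)

lemma lvecFrom_image : ∀ (L : List PGraph) (F : PGraph),
    lvecFrom (F.image (fun z => s - z)) (L.map (fun A => A.image (fun z => s - z))) =
      lvecFrom F L := by
  intro L
  induction L with
  | nil => intro F; rfl
  | cons A L ih =>
    intro F
    simp only [List.map_cons]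
    rw [lvecFrom_cons, lvecFrom_cons, ominus_image, lam_image, ← Finset.image_union, ih]

lemma lvec_image (L : List PGraph) :
    lvec (L.map (fun A => A.image (fun z => s - z))) = lvec L := by
  unfold lvec
  rw [← Finset.image_empty (fun z => s - z), lvecFrom_image, Finset.image_empty]

lemma seqList_image {m : ℕ} (G : Fin m → PGraph) :
    seqList (fun j => (G j).image (fun z => s - z)) =
      (seqList G).map (fun A => A.image (fun z => s - z)) := by
  unfold seqList
  rw [List.map_map]
  rfl

lemma unionBelow_image {m : ℕ} (G : Fin m → PGraph) (p : Fin m) :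
    unionBelow (fun j => (G j).image (fun z => s - z)) p =
      (unionBelow G p).image (fun z => s - z) := by
  rw [unionBelow_eq_biUnion, unionBelow_eq_biUnion, Finset.biUnion_image]

end Reflection


theorem main_thm (k m : ℕ) (hk : 1 ≤ k) (G : Fin m → PGraph)
    (hcov : Finset.univ.biUnion G = pathk k)
    (hdvec : dvec (seqList G) = 1) :
    ∃ σ : Equiv.Perm (Fin m), IsShiftPerm σ ∧
      (k : ℝ) / 4 ≤ (lvec (seqList fun j => G (σ j)) : ℝ) := by
  classical
  have h1k : (1 : ℤ) ∈ pathk k := by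
    show (1 : ℤ) ∈ Finset.Icc 1 (k : ℤ)
    rw [Finset.mem_Icc]
    exact ⟨le_refl _, by exact_mod_cast hk⟩
  have hTne : (Finset.univ.filter fun p : Fin m => G p ≠ ∅).Nonempty := by
    rw [← hcov] at h1k
    obtain ⟨i, _, hi⟩ := Finset.mem_biUnion.mp h1k
    exact ⟨i, Finset.mem_filter.mpr ⟨Finset.mem_univ _, fun he => by
      rw [he] at hi; exact absurd hi (Finset.notMem_empty _)⟩⟩
  set T := Finset.univ.filter fun p : Fin m => G p ≠ ∅ with hT
  set t := T.min' hTne with ht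
  have htT : t ∈ T := T.min'_mem hTne
  have hGtne : G t ≠ ∅ := (Finset.mem_filter.mp htT).2
  have hempty : ∀ j : Fin m, j < t → G j = ∅ := by
    intro j hj
    by_contra hne
    have hjT : j ∈ T := Finset.mem_filter.mpr ⟨Finset.mem_univ _, hne⟩
    have := T.min'_le _ hjT
    exact absurd hj (not_lt.mpr this)
  have hUBt : unionBelow G t = ∅ := by
    rw [unionBelow_eq_biUnion]
    apply Finset.eq_empty_of_forall_notMem
    intro x hx
    obtain ⟨i, hi, hx⟩ := Finset.mem_biUnion.mp hx
    rw [Finset.mem_filter] at hi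
    rw [hempty i hi.2] at hx
    exact absurd hx (Finset.notMem_empty _)
  have hsum : ∑ p : Fin m, Delta (ominus (G p) (unionBelow G p)) = 1 := by
    rw [← dvec_seqList]; exact hdvec
  have htpos : 1 ≤ Delta (ominus (G t) (unionBelow G t)) := by
    rw [hUBt, ominus_empty]
    exact nonempty_of_Delta_pos hGtne
  have hothers : ∀ j : Fin m, j ≠ t → Delta (ominus (G j) (unionBelow G j)) = 0 := by
    intro j hj
    by_contra h0
    have hj1 : 1 ≤ Delta (ominus (G j) (unionBelow G j)) := Nat.one_le_iff_ne_zero.mpr h0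
    have hpair : ∑ p ∈ ({t, j} : Finset (Fin m)), Delta (ominus (G p) (unionBelow G p)) ≤
        ∑ p : Fin m, Delta (ominus (G p) (unionBelow G p)) :=
      Finset.sum_le_sum_of_subset (Finset.subset_univ _)
    rw [Finset.sum_pair (Ne.symm hj)] at hpair
    omega
  have hDelta1 : Delta (G t) = 1 := by
    have hs := Finset.sum_eq_single_of_mem t (Finset.mem_univ t)
      (fun b _ hb => hothers b hb)
    rw [hs, hUBt, ominus_empty] at hsum
    exact hsum
  have hGtnonempty : (G t).Nonempty := Finset.nonempty_iff_ne_empty.mpr hGtne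
  set l := (G t).min' hGtnonempty with hl
  set r := (G t).max' hGtnonempty with hr
  have hGt : G t = Finset.Icc l r := eq_Icc_of_Delta_eq_one hGtnonempty hDelta1
  have hlr : l ≤ r := Finset.min'_le _ _ ((G t).max'_mem hGtnonempty)
  have h2 : ∀ j : Fin m, j ≠ t → ominus (G j) (unionBelow G j) = ∅ := fun j hj =>
    Delta_eq_zero_iff.mp (hothers j hj)
  obtain ⟨σ₁, hsh₁, hv₁⟩ := one_sided k hk G hcov t l r hGt hlr hempty h2
  -- reflected instance
  set G' : Fin m → PGraph := fun j => (G j).image (fun z => ((k : ℤ) + 1) - z) with hG'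
  have hpathk_img : (pathk k).image (fun z => ((k : ℤ) + 1) - z) = pathk k := by
    ext x
    rw [refl_mem]
    show ((k : ℤ) + 1) - x ∈ Finset.Icc 1 (k : ℤ) ↔ x ∈ Finset.Icc 1 (k : ℤ)
    rw [Finset.mem_Icc, Finset.mem_Icc]
    omega
  have hcov' : Finset.univ.biUnion G' = pathk k := by
    have hbi : Finset.univ.biUnion G' =
        (Finset.univ.biUnion G).image (fun z => ((k : ℤ) + 1) - z) :=
      (Finset.biUnion_image).symm
    rw [hbi, hcov, hpathk_img]
  have hGt' : G' t = Finset.Icc (((k : ℤ) + 1) - r) (((k : ℤ) + 1) - l) := by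
    show (G t).image (fun z => ((k : ℤ) + 1) - z) = _
    rw [hGt]
    ext x
    rw [refl_mem, Finset.mem_Icc, Finset.mem_Icc]
    omega
  have hempty' : ∀ j : Fin m, j < t → G' j = ∅ := by
    intro j hj
    show (G j).image _ = ∅
    rw [hempty j hj, Finset.image_empty]
  have h2' : ∀ j : Fin m, j ≠ t → ominus (G' j) (unionBelow G' j) = ∅ := by
    intro j hj
    show ominus ((G j).image (fun z => ((k : ℤ) + 1) - z))
      (unionBelow (fun i => (G i).image (fun z => ((k : ℤ) + 1) - z)) j) = ∅
    rw [unionBelow_image, ominus_image, h2 j hj, Finset.image_empty]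
  obtain ⟨σ₂, hsh₂, hv₂⟩ := one_sided k hk G' hcov' t (((k : ℤ) + 1) - r) (((k : ℤ) + 1) - l)
    hGt' (by omega) hempty' h2'
  have hlvec2 : lvec (seqList fun j => G' (σ₂ j)) = lvec (seqList fun j => G (σ₂ j)) := by
    show lvec (seqList fun j => (G (σ₂ j)).image (fun z => ((k : ℤ) + 1) - z)) = _
    rw [seqList_image, lvec_image]
  rw [hlvec2] at hv₂
  set A := lvec (seqList fun j => G (σ₁ j)) with hA
  set B := lvec (seqList fun j => G (σ₂ j)) with hB
  rcases le_or_gt B A with hc | hc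
  · refine ⟨σ₁, hsh₁, ?_⟩
    have hcz : (B : ℤ) ≤ (A : ℤ) := by exact_mod_cast hc
    have h4 : (k : ℤ) ≤ 4 * (A : ℤ) := by omega
    have h4r : (k : ℝ) ≤ 4 * (A : ℝ) := by exact_mod_cast h4
    rw [← hA]
    linarith
  · refine ⟨σ₂, hsh₂, ?_⟩
    have hcz : (A : ℤ) ≤ (B : ℤ) := by exact_mod_cast hc.le
    have h4 : (k : ℤ) ≤ 4 * (B : ℤ) := by omega
    have h4r : (k : ℝ) ≤ 4 * (B : ℝ) := by exact_mod_cast h4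
    rw [← hB]
    linarith


end PreMain


/-- **Pre-Main Lemma (II).**  If `G_1 ∪ ⋯ ∪ G_m = Path_k` and `Δ⃗(G_1,…,G_m) = 1`, then there
is a shift permutation `σ` with `λ⃗(G_{σ(1)},…,G_{σ(m)}) ≥ k/4`. -/
theorem pre_main_lemma_II (k m : ℕ) (hk : 1 ≤ k) (G : Fin m → PGraph)
    (hcov : Finset.univ.biUnion G = pathk k)
    (hdvec : dvec (seqList G) = 1) :
    ∃ σ : Equiv.Perm (Fin m), IsShiftPerm σ ∧
      (k : ℝ) / 4 ≤ (lvec (seqList fun j => G (σ j)) : ℝ) :=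
  PreMain.main_thm k m hk G hcov hdvec
end
end

section
/- For all real numbers x_1, …, x_m, y_1, …, y_m ≥ 0 and every real number d > 1, max_{j∈{1,…,m}} ( (d−1)·x_j^{1/(d−1)} + Σ_{i=1}^j y_i ) ≥ d·( (1/e)·Σ_{j=1}^m x_j y_j )^{1/d}. -/
open Real Finset in
/-- Bernoulli-type: tangent line inequality for `rpow`. -/
lemma bern_aux {u v d : ℝ} (hu : 0 ≤ u) (huv : u ≤ v) (hd : 1 < d) :
    d * u ^ (d - 1) * (v - u) ≤ v ^ d - u ^ d := by
  rcases eq_or_lt_of_le hu with h0 | h0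
  · subst h0
    rw [Real.zero_rpow (by linarith), Real.zero_rpow (by linarith)]
    have : (0:ℝ) ≤ v ^ d := Real.rpow_nonneg huv d
    nlinarith
  · set s := (v - u) / u with hs
    have hs0 : 0 ≤ s := div_nonneg (by linarith) h0.le
    have hber : 1 + d * s ≤ (1 + s) ^ d :=
      one_add_mul_self_le_rpow_one_add (by linarith) hd.le
    have h1s : (1 : ℝ) + s = v / u := by
      field_simp [hs]
      rw [hs, add_mul, div_mul_cancel₀ _ (ne_of_gt h0)]; ring
    have hud : (0:ℝ) < u ^ d := Real.rpow_pos_of_pos h0 d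
    have hkey : (1 + d * s) * u ^ d ≤ v ^ d := by
      calc (1 + d * s) * u ^ d ≤ (1 + s) ^ d * u ^ d := by nlinarith
        _ = (v / u) ^ d * u ^ d := by rw [h1s]
        _ = v ^ d := by
            rw [Real.div_rpow (by linarith) h0.le]
            field_simp
    have hsplit : u ^ d = u ^ (d - 1) * u := by
      rw [← Real.rpow_add_one (ne_of_gt h0)]; ring_nf
    have : d * s * u ^ d = d * u ^ (d - 1) * (v - u) := by
      rw [hsplit, hs]; field_simp
    nlinarith

/-- Numerical inequality: `(1+1/t)^t ≤ e` form. -/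
lemma dpow_aux {d : ℝ} (hd : 1 < d) : d ^ (d-1) ≤ Real.exp 1 * (d-1) ^ (d-1) := by
  have h1 : (0:ℝ) < d - 1 := by linarith
  have heq : d = (d - 1) * (1 + 1/(d-1)) := by field_simp; ring
  nth_rewrite 1 [heq]
  rw [Real.mul_rpow h1.le (by positivity)]
  have hbd : (1 + 1/(d-1) : ℝ) ^ (d-1) ≤ Real.exp 1 := by
    have h2 : (1 + 1/(d-1) : ℝ) ≤ Real.exp (1/(d-1)) := by
      have := Real.add_one_le_exp (1/(d-1)); linarith
    calc (1 + 1/(d-1) : ℝ) ^ (d-1) ≤ (Real.exp (1/(d-1))) ^ (d-1) :=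
          Real.rpow_le_rpow (by positivity) h2 h1.le
      _ = Real.exp 1 := by
          rw [← Real.exp_one_rpow (1/(d-1)), ← Real.rpow_mul (Real.exp_pos 1).le]
          rw [one_div, inv_mul_cancel₀ (ne_of_gt h1), Real.rpow_one]
  calc (d-1) ^ (d-1) * (1 + 1/(d-1)) ^ (d-1)
      ≤ (d-1) ^ (d-1) * Real.exp 1 := by
        exact mul_le_mul_of_nonneg_left hbd (Real.rpow_nonneg h1.le _)
    _ = Real.exp 1 * (d-1) ^ (d-1) := mul_comm _ _

/-- **Numerical inequality (Lemma 3.6).**  For all reals `x_1,…,x_m, y_1,…,y_m ≥ 0` and `d > 1`,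
`max_j ((d−1)·x_j^{1/(d−1)} + Σ_{i≤j} y_i) ≥ d·((1/e)·Σ_j x_j y_j)^{1/d}`. -/
theorem numerical_inequality (m : ℕ) (hm : 0 < m) (x y : Fin m → ℝ)
    (hx : ∀ j, 0 ≤ x j) (hy : ∀ j, 0 ≤ y j) (d : ℝ) (hd : 1 < d) :
    d * ((1 / Real.exp 1) * ∑ j, x j * y j) ^ (1 / d) ≤
      ⨆ j : Fin m, ((d - 1) * x j ^ (1 / (d - 1)) + ∑ i ∈ Finset.Iic j, y i) := by
  have hd1 : (0:ℝ) < d - 1 := by linarith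
  have hd0 : (0:ℝ) < d := by linarith
  haveI : Nonempty (Fin m) := ⟨⟨0, hm⟩⟩
  set f : Fin m → ℝ := fun j => (d - 1) * x j ^ (1 / (d - 1)) + ∑ i ∈ Finset.Iic j, y i with hf
  set M : ℝ := ⨆ j, f j with hM
  have hfle : ∀ j, f j ≤ M := fun j => le_ciSup (Set.Finite.bddAbove (Set.finite_range f)) j
  have hfnn : ∀ j, 0 ≤ f j := by
    intro j
    have h1 : 0 ≤ (d-1) * x j ^ (1/(d-1)) :=
      mul_nonneg hd1.le (Real.rpow_nonneg (hx j) _)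
    have h2 : 0 ≤ ∑ i ∈ Finset.Iic j, y i := Finset.sum_nonneg fun i _ => hy i
    simp only [hf]
    exact add_nonneg h1 h2
  have hM0 : 0 ≤ M := le_trans (hfnn ⟨0, hm⟩) (hfle ⟨0, hm⟩)
  -- extend y to ℕ
  set Y : ℕ → ℝ := fun i => if h : i < m then y ⟨i, h⟩ else 0 with hY
  have hYnn : ∀ i, 0 ≤ Y i := by
    intro i; simp only [hY]; split
    · exact hy _
    · exact le_rfl
    -- partial sums
  set T : ℕ → ℝ := fun n => ∑ i ∈ Finset.range n, Y i with hT
  have hIic : ∀ j : Fin m, ∑ i ∈ Finset.Iic j, y i = T (j.val + 1) := by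
    intro j
    have h1 : T (j.val + 1) = ∑ i ∈ Finset.Iic (j.val), Y i := by
      have hr : Finset.range (j.val + 1) = Finset.Iic (j.val) := by
        ext i; simp [Nat.lt_succ_iff]
      rw [hT]; simp only [hr]
    rw [h1, ← Fin.map_valEmbedding_Iic, Finset.sum_map]
    apply Finset.sum_congr rfl
    intro i _
    simp [hY, i.isLt]
  have hSle : ∀ j : Fin m, (d - 1) * x j ^ (1 / (d - 1)) + T (j.val + 1) ≤ M := by
    intro j; rw [← hIic j]; exact hfle j
  have hTm : T m ≤ M := by
    have := hSle ⟨m - 1, Nat.sub_lt hm Nat.one_pos⟩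
    have hx' : 0 ≤ (d-1) * x ⟨m-1, Nat.sub_lt hm Nat.one_pos⟩ ^ (1/(d-1)) :=
      mul_nonneg hd1.le (Real.rpow_nonneg (hx _) _)
    have hmm : m - 1 + 1 = m := Nat.succ_pred_eq_of_pos hm
    rw [hmm] at this; linarith
  have hTmono : ∀ n, T n ≤ T (n + 1) := by
    intro n
    simp only [hT, Finset.sum_range_succ]
    have := hYnn n; linarith
  have hTM : ∀ n, n ≤ m → T n ≤ M := by
    intro n hn
    have : T n ≤ T m := by
      have : ∀ k, T n ≤ T (n + k) := by
        intro k; induction k with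
        | zero => simp
        | succ k ih => exact le_trans ih (hTmono _)
      have h := this (m - n); rwa [Nat.add_sub_cancel' hn] at h
    linarith
  -- key per-term bound
  have hterm : ∀ j : Fin m, x j * y j ≤
      ((M - T j.val) ^ d - (M - T (j.val + 1)) ^ d) / (d * (d-1) ^ (d-1)) := by
    intro j
    set u := M - T (j.val + 1) with hu
    set v := M - T j.val with hv
    have hu0 : (d - 1) * x j ^ (1/(d-1)) ≤ u := by
      have := hSle j; simp only [hu]; linarith
    have hunn : 0 ≤ u :=
      le_trans (mul_nonneg hd1.le (Real.rpow_nonneg (hx j) _)) hu0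
    have huv : u ≤ v := by
      have := hTmono j.val; simp only [hu, hv]; linarith
    have hyj : v - u = y j := by
      simp only [hu, hv, hT, Finset.sum_range_succ]
      have : Y j.val = y j := by simp [hY, j.isLt]
      linarith [this]
    have hxj : x j ≤ (u / (d-1)) ^ (d-1) := by
      have h1 : x j ^ (1/(d-1)) ≤ u / (d-1) := by
        rw [le_div_iff₀ hd1]; linarith [hu0]
      have h2 : (x j ^ (1/(d-1))) ^ (d-1) ≤ (u / (d-1)) ^ (d-1) :=
        Real.rpow_le_rpow (Real.rpow_nonneg (hx j) _) h1 hd1.le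
      rwa [← Real.rpow_mul (hx j), one_div, inv_mul_cancel₀ (ne_of_gt hd1),
        Real.rpow_one] at h2
    have hbern : d * u ^ (d-1) * (v - u) ≤ v ^ d - u ^ d := bern_aux hunn huv hd
    have hdiv : (u / (d-1)) ^ (d-1) = u ^ (d-1) / (d-1) ^ (d-1) :=
      Real.div_rpow hunn hd1.le (d-1)
    have hpos : (0:ℝ) < d * (d-1) ^ (d-1) := by
      have := Real.rpow_pos_of_pos hd1 (d-1); positivity
    rw [le_div_iff₀ hpos]
    calc x j * y j * (d * (d-1) ^ (d-1))
        ≤ (u / (d-1)) ^ (d-1) * y j * (d * (d-1) ^ (d-1)) := by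
          have := mul_nonneg (hy j) hpos.le
          nlinarith [mul_le_mul_of_nonneg_right hxj (mul_nonneg (hy j) hpos.le)]
      _ = d * u ^ (d-1) * (v - u) := by
          rw [hdiv, hyj]
          have h1 : (0:ℝ) < (d-1) ^ (d-1) := Real.rpow_pos_of_pos hd1 (d-1)
          field_simp
      _ ≤ v ^ d - u ^ d := hbern
  -- sum up with telescoping
  have hsum : ∑ j, x j * y j ≤ M ^ d / (d * (d-1) ^ (d-1)) := by
    have h1 : ∑ j : Fin m, ((M - T j.val) ^ d - (M - T (j.val+1)) ^ d)
        = (M - T 0) ^ d - (M - T m) ^ d := by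
      rw [Fin.sum_univ_eq_sum_range (fun i => (M - T i) ^ d - (M - T (i+1)) ^ d)]
      have := Finset.sum_range_sub (fun i => (M - T i) ^ d) m
      have h2 : ∑ i ∈ Finset.range m, ((M - T i) ^ d - (M - T (i+1)) ^ d)
          = -∑ i ∈ Finset.range m, ((M - T (i+1)) ^ d - (M - T i) ^ d) := by
        rw [← Finset.sum_neg_distrib]; apply Finset.sum_congr rfl; intros; ring
      rw [h2, this]; ring
    have h2 : (M - T 0) ^ d - (M - T m) ^ d ≤ M ^ d := by
      have hT0 : T 0 = 0 := by simp [hT]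
      have : 0 ≤ (M - T m) ^ d := Real.rpow_nonneg (by linarith [hTm]) d
      rw [hT0, sub_zero]; linarith
    have hpos : (0:ℝ) < d * (d-1) ^ (d-1) := by
      have := Real.rpow_pos_of_pos hd1 (d-1); positivity
    calc ∑ j, x j * y j ≤ ∑ j : Fin m, ((M - T j.val) ^ d - (M - T (j.val+1)) ^ d) / (d * (d-1) ^ (d-1)) :=
          Finset.sum_le_sum fun j _ => hterm j
      _ = (∑ j : Fin m, ((M - T j.val) ^ d - (M - T (j.val+1)) ^ d)) / (d * (d-1) ^ (d-1)) := by
          rw [Finset.sum_div]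
      _ ≤ M ^ d / (d * (d-1) ^ (d-1)) := by
          rw [h1]
          exact (div_le_div_iff_of_pos_right hpos).mpr h2
    -- finish
  have hpos : (0:ℝ) < d * (d-1) ^ (d-1) := by
    have := Real.rpow_pos_of_pos hd1 (d-1); positivity
  have hSnn : 0 ≤ ∑ j, x j * y j :=
    Finset.sum_nonneg fun j _ => mul_nonneg (hx j) (hy j)
  have hdd : d ^ d = d * d ^ (d-1) := by
    nth_rewrite 2 [show d = 1 + (d-1) by ring]
    rw [Real.rpow_add hd0, Real.rpow_one]
  have hdpow : d ^ d ≤ Real.exp 1 * (d * (d-1) ^ (d-1)) := by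
    have := dpow_aux hd
    rw [hdd]; nlinarith
  have hfin : (1 / Real.exp 1) * ∑ j, x j * y j ≤ (M/d) ^ d := by
    rw [Real.div_rpow hM0 hd0.le]
    have he : (0:ℝ) < Real.exp 1 := Real.exp_pos 1
    have hMd : 0 ≤ M ^ d := Real.rpow_nonneg hM0 d
    have hd2 : (0:ℝ) < d ^ d := Real.rpow_pos_of_pos hd0 d
    calc (1 / Real.exp 1) * ∑ j, x j * y j
        ≤ (1 / Real.exp 1) * (M ^ d / (d * (d-1) ^ (d-1))) :=
          mul_le_mul_of_nonneg_left hsum (by positivity)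
      _ = M ^ d / (Real.exp 1 * (d * (d-1) ^ (d-1))) := by
          field_simp
      _ ≤ M ^ d / d ^ d :=
          div_le_div_of_nonneg_left hMd hd2 hdpow
  have hnn : 0 ≤ (1 / Real.exp 1) * ∑ j, x j * y j := by positivity
  have h3 : ((1 / Real.exp 1) * ∑ j, x j * y j) ^ (1/d) ≤ ((M/d) ^ d) ^ (1/d) :=
    Real.rpow_le_rpow hnn hfin (by positivity)
  have h4 : ((M/d) ^ d) ^ (1/d) = M/d := by
    rw [← Real.rpow_mul (div_nonneg hM0 hd0.le), mul_one_div_cancel (ne_of_gt hd0),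
      Real.rpow_one]
  rw [h4] at h3
  calc d * ((1 / Real.exp 1) * ∑ j, x j * y j) ^ (1/d) ≤ d * (M/d) :=
        mul_le_mul_of_nonneg_left h3 hd0.le
    _ = M := by field_simp
end

section
/- Let G_1, …, G_m be finite subgraphs of the infinite path Path_ℤ, let I ⊆ {1,…,m} be a set containing m, let σ = σ_I be the associated shift permutation, and let σ̃_j be its induced shift permutations. Then for every j ∈ {1,…,m}, Δ⃗(G_{σ̃_j(1)},…,G_{σ̃_j(m)}) ≥ Σ_{i∈I} Δ(G_i ⊖ (G_1 ∪ ⋯ ∪ G_{i−1})). -/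
noncomputable section

/-- The shift permutation `σ_I` (as a function) associated with a set `I` of indices
(0-indexed; in the intended use `I` contains the last index): `σ_I(j)` is the least element
of `I` that is `≥ j` when `j = 0` or `j - 1 ∈ I`, and `j - 1` otherwise. -/
def sigmaFun {m : ℕ} (I : Finset (Fin m)) (j : Fin m) : Fin m :=
  if (j : ℕ) = 0 ∨ ∃ i ∈ I, (i : ℕ) + 1 = (j : ℕ) then
    WithTop.untopD j (I.filter fun a => j ≤ a).min
  else ⟨(j : ℕ) - 1, lt_of_le_of_lt (Nat.sub_le _ 1) j.isLt⟩

/-- The index set `Ĩ_j` of the induced shift permutation `σ̃_j`: if `j ∈ I`, add all indices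
up to the predecessor of `j` in `I`; if `j ∉ I`, add all indices below `j`. -/
def tildeI {m : ℕ} (I : Finset (Fin m)) (j : Fin m) : Finset (Fin m) :=
  if j ∈ I then I ∪ Finset.univ.filter fun a => ∃ b ∈ I, b < j ∧ a ≤ b
  else I ∪ Finset.univ.filter fun a => a < j

/-- The induced shift permutation `σ̃_j := σ_{Ĩ_j}` (as a function). -/
def sigmaTilde {m : ℕ} (I : Finset (Fin m)) (j : Fin m) : Fin m → Fin m :=
  sigmaFun (tildeI I j)


lemma comp_pred_subset (G : PGraph) (i : ℤ) (hi : i ∈ G) (hi' : i - 1 ∈ G) :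
    comp G (i - 1) ⊆ comp G i := by
  intro j hj
  simp only [comp, Finset.mem_filter] at hj ⊢
  refine ⟨hj.1, fun l hl => ?_⟩
  simp only [Finset.mem_Icc] at hl
  by_cases h : l = i
  · exact h ▸ hi
  · exact hj.2 l (Finset.mem_Icc.2 (by omega))

lemma mem_ominus_pred (G F : PGraph) (i : ℤ) (h : i ∈ ominus G F) (h' : i - 1 ∈ G) :
    i - 1 ∈ ominus G F := by
  simp only [ominus, Finset.mem_filter] at h ⊢
  exact ⟨h', fun j hj f hf => h.2 j (comp_pred_subset G i h.1 h' hj) f hf⟩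

lemma ominus_anti (G : PGraph) {F F' : PGraph} (h : F ⊆ F') :
    ominus G F' ⊆ ominus G F := by
  intro x hx
  simp only [ominus, Finset.mem_filter] at hx ⊢
  exact ⟨hx.1, fun j hj f hf => hx.2 j hj f (h hf)⟩

lemma delta_ominus_anti (G : PGraph) {F F' : PGraph} (h : F ⊆ F') :
    Delta (ominus G F') ≤ Delta (ominus G F) := by
  apply Finset.card_le_card
  intro i hi
  simp only [Finset.mem_filter] at hi ⊢
  obtain ⟨h1, h2⟩ := hi
  refine ⟨ominus_anti G h h1, fun hc => h2 ?_⟩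
  have hG : i - 1 ∈ G := (Finset.mem_filter.1 hc).1
  exact mem_ominus_pred G F' i h1 hG

lemma unionBelow_zero {m : ℕ} (f : Fin (m + 1) → PGraph) : unionBelow f 0 = ∅ := by
  ext x
  simp [unionBelow]

lemma unionBelow_succ {m : ℕ} (f : Fin (m + 1) → PGraph) (k : Fin m) :
    unionBelow f k.succ = f 0 ∪ unionBelow (f ∘ Fin.succ) k := by
  ext x
  simp only [unionBelow, Finset.mem_biUnion, Finset.mem_filter, Finset.mem_univ, true_and,
    Finset.mem_union, Function.comp]
  constructor
  · rintro ⟨i, hik, hx⟩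
    induction i using Fin.cases with
    | zero => exact Or.inl hx
    | succ a => exact Or.inr ⟨a, by simpa using hik, hx⟩
  · rintro (hx | ⟨a, hak, hx⟩)
    · exact ⟨0, Fin.succ_pos k, hx⟩
    · exact ⟨a.succ, by simpa using hak, hx⟩

set_option maxHeartbeats 1000000 in
lemma dvecFrom_seqList : ∀ (m : ℕ) (f : Fin m → PGraph) (F : PGraph),
    dvecFrom F (seqList f) = ∑ k : Fin m, Delta (ominus (f k) (F ∪ unionBelow f k))
  | 0, f, F => by simp [seqList, dvecFrom]
  | (m + 1), f, F => by
    have hs : seqList f = f 0 :: seqList (f ∘ Fin.succ) := by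
      simp [seqList, List.finRange_succ, List.map_map]
    rw [hs, dvecFrom, dvecFrom_seqList m (f ∘ Fin.succ) (F ∪ f 0), Fin.sum_univ_succ]
    congr 1
    · rw [unionBelow_zero, Finset.union_empty]
    · refine Finset.sum_congr rfl fun k _ => ?_
      rw [unionBelow_succ, Finset.union_assoc]
      rfl

lemma sigmaFun_eq_of {m : ℕ} (J : Finset (Fin (m + 1))) (i p : Fin (m + 1))
    (hi : i ∈ J) (hcond : (p : ℕ) = 0 ∨ ∃ b ∈ J, (b : ℕ) + 1 = (p : ℕ))
    (hpi : p ≤ i) (hmin : ∀ b ∈ J, p ≤ b → i ≤ b) :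
    sigmaFun J p = i := by
  rw [sigmaFun, if_pos hcond]
  have h1 : (J.filter fun a => p ≤ a).min = (i : WithTop (Fin (m + 1))) := by
    apply le_antisymm
    · exact Finset.min_le (Finset.mem_filter.2 ⟨hi, hpi⟩)
    · exact Finset.le_min fun b hb => by
        obtain ⟨hbJ, hpb⟩ := Finset.mem_filter.1 hb
        exact_mod_cast hmin b hbJ hpb
  rw [h1]
  rfl

lemma sigmaFun_lt_of {m : ℕ} (J : Finset (Fin (m + 1))) (i b a : Fin (m + 1))
    (hb : b ∈ J) (hab : a ≤ b) (hbi : b < i) :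
    sigmaFun J a < i := by
  rw [sigmaFun]
  split
  · have hbmem : b ∈ J.filter fun x => a ≤ x := Finset.mem_filter.2 ⟨hb, hab⟩
    obtain ⟨c, hc⟩ := Finset.min_of_mem hbmem
    have hcb : c ≤ b := by
      have := Finset.min_le hbmem
      rw [hc] at this
      exact_mod_cast this
    rw [hc, WithTop.untopD_coe]
    exact lt_of_le_of_lt hcb hbi
  · have h1 : (a : ℕ) ≤ (b : ℕ) := hab
    have h2 : (b : ℕ) < (i : ℕ) := hbi
    exact Fin.lt_def.2 (by simp only []; omega)

def posOf {m : ℕ} (J : Finset (Fin (m + 1))) (i : Fin (m + 1)) : Fin (m + 1) :=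
  if h : (J.filter fun b => b < i).Nonempty then
    ⟨((J.filter fun b => b < i).max' h : ℕ) + 1,
      Nat.lt_of_le_of_lt
        (Nat.succ_le_of_lt (Fin.lt_def.1 (Finset.mem_filter.1 (Finset.max'_mem _ h)).2)) i.isLt⟩
  else 0

lemma sigmaFun_posOf {m : ℕ} (J : Finset (Fin (m + 1))) (i : Fin (m + 1)) (hi : i ∈ J) :
    sigmaFun J (posOf J i) = i := by
  rw [posOf]
  split
  case isTrue h =>
    set M := (J.filter fun b => b < i).max' h with hM
    have hMmem := Finset.max'_mem _ h
    rw [← hM] at hMmem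
    obtain ⟨hMJ, hMi⟩ := Finset.mem_filter.1 hMmem
    apply sigmaFun_eq_of J i _ hi
    · exact Or.inr ⟨M, hMJ, rfl⟩
    · exact Fin.le_def.2 (Nat.succ_le_of_lt (Fin.lt_def.1 hMi))
    · intro b hbJ hpb
      by_contra hbi
      push_neg at hbi
      have hbm : b ∈ J.filter fun b => b < i := Finset.mem_filter.2 ⟨hbJ, hbi⟩
      have := Finset.le_max' _ b hbm
      rw [← hM] at this
      have h1 : (M : ℕ) + 1 ≤ (b : ℕ) := Fin.le_def.1 hpb
      have h2 : (b : ℕ) ≤ (M : ℕ) := Fin.le_def.1 this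
      omega
  case isFalse h =>
    apply sigmaFun_eq_of J i _ hi
    · exact Or.inl rfl
    · exact Fin.zero_le i
    · intro b hbJ _
      by_contra hbi
      push_neg at hbi
      exact h ⟨b, Finset.mem_filter.2 ⟨hbJ, hbi⟩⟩

lemma sigmaFun_lt_posOf {m : ℕ} (J : Finset (Fin (m + 1))) (i a : Fin (m + 1))
    (ha : a < posOf J i) : sigmaFun J a < i := by
  rw [posOf] at ha
  split at ha
  case isTrue h =>
    set M := (J.filter fun b => b < i).max' h with hM
    have hMmem := Finset.max'_mem _ h
    rw [← hM] at hMmem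
    obtain ⟨hMJ, hMi⟩ := Finset.mem_filter.1 hMmem
    have haM : a ≤ M := by
      have h3 : (a : ℕ) < (M : ℕ) + 1 := Fin.lt_def.1 ha
      exact Fin.le_def.2 (by omega)
    exact sigmaFun_lt_of J i M a hMJ haM hMi
  case isFalse h =>
    exact absurd ha (Fin.not_lt_zero a)

lemma key_lemma (m : ℕ) (G : Fin (m + 1) → PGraph) (J : Finset (Fin (m + 1))) :
    ∑ i ∈ J, Delta (ominus (G i) (unionBelow G i)) ≤
      dvec (seqList fun a => G (sigmaFun J a)) := by
  rw [dvec, dvecFrom_seqList]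
  simp only [Finset.empty_union]
  calc ∑ i ∈ J, Delta (ominus (G i) (unionBelow G i))
      ≤ ∑ i ∈ J, Delta (ominus (G (sigmaFun J (posOf J i)))
          (unionBelow (fun a => G (sigmaFun J a)) (posOf J i))) := by
        apply Finset.sum_le_sum
        intro i hi
        rw [sigmaFun_posOf J i hi]
        apply delta_ominus_anti
        intro x hx
        simp only [unionBelow, Finset.mem_biUnion, Finset.mem_filter, Finset.mem_univ,
          true_and] at hx ⊢
        obtain ⟨a, hai, hx⟩ := hx
        exact ⟨sigmaFun J a, sigmaFun_lt_posOf J i a hai, hx⟩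
    _ = ∑ k ∈ J.image (posOf J), Delta (ominus (G (sigmaFun J k))
          (unionBelow (fun a => G (sigmaFun J a)) k)) := by
        rw [Finset.sum_image]
        intro a ha b hb hab
        have h2 : sigmaFun J (posOf J a) = sigmaFun J (posOf J b) := by rw [hab]
        rwa [sigmaFun_posOf J a ha, sigmaFun_posOf J b hb] at h2
    _ ≤ ∑ k : Fin (m + 1), Delta (ominus (G (sigmaFun J k))
          (unionBelow (fun a => G (sigmaFun J a)) k)) :=
        Finset.sum_le_sum_of_subset (Finset.subset_univ _)

/-- **Lemma 5.3.**  For every set `I` of indices containing the last one, with associated shift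
permutation `σ_I` and induced shift permutations `σ̃_j`, and every `j`,
`Δ⃗(G_{σ̃_j(1)},…,G_{σ̃_j(m)}) ≥ Σ_{i ∈ I} Δ(G_i ⊖ (G_1 ∪ ⋯ ∪ G_{i-1}))`. -/
theorem induced_shift_lower_bound (m : ℕ) (G : Fin (m + 1) → PGraph)
    (I : Finset (Fin (m + 1))) (hI : Fin.last m ∈ I) (j : Fin (m + 1)) :
    ∑ i ∈ I, Delta (ominus (G i) (unionBelow G i)) ≤
      dvec (seqList fun a => G (sigmaTilde I j a)) := by
  have h1 : I ⊆ tildeI I j := by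
    unfold tildeI
    split <;> exact Finset.subset_union_left
  calc ∑ i ∈ I, Delta (ominus (G i) (unionBelow G i))
      ≤ ∑ i ∈ tildeI I j, Delta (ominus (G i) (unionBelow G i)) :=
        Finset.sum_le_sum_of_subset h1
    _ ≤ _ := key_lemma m G (tildeI I j)
end
end

section
/- Suppose T = ⟦T_1,…,T_m⟧ where each T_j is a G_j-join tree for finite subgraphs G_1,…,G_m of the infinite path Path_ℤ. Then for every j ∈ {1,…,m}, Ψ(T) ≥ Ψ(T_j) + Δ⃗(G_1,…,G_m | G_j). -/
noncomputable section

/-- Join trees: finite binary trees whose leaves are labelled by subgraphs of `Path_ℤ`. -/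
inductive JoinTree where
  | leaf : PGraph → JoinTree
  | node : JoinTree → JoinTree → JoinTree

namespace JoinTree

/-- The graph labelling a node (the label of an internal node is the union of the labels
of its children). -/
def graph : JoinTree → PGraph
  | leaf G => G
  | node T₁ T₂ => T₁.graph ∪ T₂.graph

/-- A join tree is valid if each leaf is labelled by a single-edge graph or by `∅`. -/
def valid : JoinTree → Prop
  | leaf G => G.card ≤ 1
  | node T₁ T₂ => T₁.valid ∧ T₂.valid

/-- The lists `B_1, …, B_ℓ` of sibling labels (top to bottom, ending with the leaf label)
along each root-to-leaf branch. -/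
def branches : JoinTree → List (List PGraph)
  | leaf G => [[G]]
  | node T₁ T₂ =>
    ((branches T₁).map fun b => T₂.graph :: b) ++ ((branches T₂).map fun b => T₁.graph :: b)

end JoinTree

/-- `Ψ(T)`: the maximum of `Δ⃗(C_1,…,C_r)` over all `T`-branch coverings `{C_1,…,C_r}` of the
root graph and all enumerations `C_1,…,C_r` of them. -/
def Psi (T : JoinTree) : ℕ :=
  (T.branches.map fun b => ((b.dedup.permutations).map dvec).foldr max 0).foldr max 0

/-- `[T_1,…,T_m] = T_1 ∪ [T_2,…,T_m]`. -/
def sqComb : (m : ℕ) → (Fin (m + 1) → JoinTree) → JoinTree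
  | 0, T => T 0
  | m + 1, T => JoinTree.node (T 0) (sqComb m fun i => T i.succ)

/-- `⟦T_1,…,T_m⟧ = ⟦T_1,…,T_{m-1}⟧ ∪ ⟦T_1,…,T_{m-2},T_m⟧`. -/
def semComb : (m : ℕ) → (Fin (m + 1) → JoinTree) → JoinTree
  | 0, T => T 0
  | m + 1, T =>
    JoinTree.node (semComb m fun i => T i.castSucc)
      (semComb m fun i => if (i : ℕ) = m then T (Fin.last (m + 1)) else T i.castSucc)

/-- `T` is expressible by nesting `[·]` operations to depth `≤ d`, starting from
single-node join trees. -/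
inductive SqDepthLE : ℕ → JoinTree → Prop
  | base (d : ℕ) (G : PGraph) : SqDepthLE d (JoinTree.leaf G)
  | step (d m : ℕ) (T : Fin (m + 1) → JoinTree) (h : ∀ i, SqDepthLE d (T i)) :
      SqDepthLE (d + 1) (sqComb m T)

/-- The `[·]`-depth of a join tree: the minimum nesting depth of `[·]` operations
required to express it. -/
def sqDepth (T : JoinTree) : ℕ := sInf {d | SqDepthLE d T}

/-- `T` is expressible by nesting `⟦·⟧` operations to depth `≤ d`, starting from
single-node join trees. -/
inductive SemDepthLE : ℕ → JoinTree → Prop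
  | base (d : ℕ) (G : PGraph) : SemDepthLE d (JoinTree.leaf G)
  | step (d m : ℕ) (T : Fin (m + 1) → JoinTree) (h : ∀ i, SemDepthLE d (T i)) :
      SemDepthLE (d + 1) (semComb m T)

/-- The `⟦·⟧`-depth of a join tree: the minimum nesting depth of `⟦·⟧` operations
required to express it. -/
def semDepth (T : JoinTree) : ℕ := sInf {d | SemDepthLE d T}

lemma self_mem_comp {G : PGraph} {i : ℤ} (h : i ∈ G) : i ∈ comp G i := by
  simp only [comp, Finset.mem_filter]
  refine ⟨h, fun l hl => ?_⟩
  simp only [Finset.mem_Icc, min_self, max_self] at hl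
  have : l = i := le_antisymm hl.2 hl.1
  exact this ▸ h

lemma comp_subset {G : PGraph} {i : ℤ} : comp G i ⊆ G := Finset.filter_subset _ _

lemma comp_mono {G H : PGraph} (h : G ⊆ H) (i : ℤ) : comp G i ⊆ comp H i := by
  intro j hj
  simp only [comp, Finset.mem_filter] at hj ⊢
  exact ⟨h hj.1, fun l hl => h (hj.2 l hl)⟩

lemma ominus_eq_empty_of_subset {G X : PGraph} (h : G ⊆ X) : ominus G X = ∅ := by
  ext i
  simp only [ominus, Finset.mem_filter, Finset.notMem_empty, iff_false]
  rintro ⟨hi, hfar⟩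
  have := hfar i (self_mem_comp hi) i (h hi)
  omega

lemma Delta_empty : Delta (∅ : PGraph) = 0 := by simp [Delta]

lemma comp_union_subset {F G X : PGraph} (hFX : F ⊆ X) {i : ℤ}
    (hiG : i ∈ G) (hfar : ∀ j ∈ comp G i, ∀ f ∈ X, 1 < (j - f).natAbs) :
    comp (F ∪ G) i ⊆ comp G i := by
  intro j hj
  simp only [comp, Finset.mem_filter, Finset.mem_union] at hj
  obtain ⟨hj1, hj2⟩ := hj
  have key : ∀ n : ℕ, ∀ l, l ∈ Finset.Icc (min i j) (max i j) → (l - i).natAbs ≤ n →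
      l ∈ comp G i := by
    intro n
    induction n with
    | zero =>
      intro l hl hd
      have : l = i := by omega
      rw [this]; exact self_mem_comp hiG
    | succ n ih =>
      intro l hl hd
      by_cases hc : (l - i).natAbs ≤ n
      · exact ih l hl hc
      have hne : l ≠ i := by omega
      simp only [Finset.mem_Icc] at hl
      -- l' : the neighbour of l towards i
      have hiIcc : min i j ≤ i ∧ i ≤ max i j := ⟨min_le_left _ _, le_max_left _ _⟩
      rcases lt_or_gt_of_ne hne with hlt | hgt
      · -- l < i, take l' = l + 1
        have hl' : l + 1 ∈ Finset.Icc (min i j) (max i j) := by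
          simp only [Finset.mem_Icc]; omega
        have hl'c : l + 1 ∈ comp G i := ih (l + 1) hl' (by omega)
        have hlG : l ∈ G := by
          rcases hj2 l (by simp only [Finset.mem_Icc]; omega) with hF | hG
          · exact absurd (hfar (l + 1) hl'c l (hFX hF)) (by omega)
          · exact hG
        simp only [comp, Finset.mem_filter]
        refine ⟨hlG, fun k hk => ?_⟩
        simp only [Finset.mem_Icc] at hk
        rcases eq_or_ne k l with rfl | hkl
        · exact hlG
        · have hk' : k ∈ comp G i := ih k (by simp only [Finset.mem_Icc]; omega) (by omega)
          exact comp_subset hk'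
      · -- i < l, take l' = l - 1
        have hl' : l - 1 ∈ Finset.Icc (min i j) (max i j) := by
          simp only [Finset.mem_Icc]; omega
        have hl'c : l - 1 ∈ comp G i := ih (l - 1) hl' (by omega)
        have hlG : l ∈ G := by
          rcases hj2 l (by simp only [Finset.mem_Icc]; omega) with hF | hG
          · exact absurd (hfar (l - 1) hl'c l (hFX hF)) (by omega)
          · exact hG
        simp only [comp, Finset.mem_filter]
        refine ⟨hlG, fun k hk => ?_⟩
        simp only [Finset.mem_Icc] at hk
        rcases eq_or_ne k l with rfl | hkl
        · exact hlG
        · have hk' : k ∈ comp G i := ih k (by simp only [Finset.mem_Icc]; omega) (by omega)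
          exact comp_subset hk'
  exact key (j - i).natAbs j (by simp only [Finset.mem_Icc]; exact ⟨min_le_right _ _, le_max_right _ _⟩) le_rfl

lemma ominus_union_left {F G X : PGraph} (h : F ⊆ X) : ominus (F ∪ G) X = ominus G X := by
  ext i
  simp only [ominus, Finset.mem_filter, Finset.mem_union]
  constructor
  · rintro ⟨hi, hfar⟩
    have hiself : i ∈ comp (F ∪ G) i := self_mem_comp (Finset.mem_union.mpr hi)
    have hiX : i ∉ X := fun hx => by have := hfar i hiself i hx; omega
    have hiG : i ∈ G := by
      rcases hi with hF | hG
      · exact absurd (h hF) hiX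
      · exact hG
    exact ⟨hiG, fun j hj f hf => hfar j (comp_mono Finset.subset_union_right i hj) f hf⟩
  · rintro ⟨hi, hfar⟩
    exact ⟨Or.inr hi, fun j hj f hf => hfar j (comp_union_subset h hi hfar hj) f hf⟩

def listUnion (L : List PGraph) : PGraph := L.foldr (· ∪ ·) ∅

lemma listUnion_append (A B : List PGraph) :
    listUnion (A ++ B) = listUnion A ∪ listUnion B := by
  induction A with
  | nil => simp [listUnion]
  | cons a A ih => simp only [listUnion, List.foldr_cons, List.cons_append] at ih ⊢
                   rw [ih, Finset.union_assoc]

lemma subset_listUnion {a : PGraph} {L : List PGraph} (h : a ∈ L) : a ⊆ listUnion L := by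
  induction L with
  | nil => simp at h
  | cons b L ih =>
    rcases List.mem_cons.mp h with rfl | h
    · exact Finset.subset_union_left
    · exact (ih h).trans Finset.subset_union_right

lemma listUnion_perm {p q : List PGraph} (h : p.Perm q) : listUnion p = listUnion q := by
  induction h with
  | nil => rfl
  | cons a _ ih => simp only [listUnion, List.foldr_cons] at ih ⊢; rw [ih]
  | swap a b l => simp only [listUnion, List.foldr_cons]
                  rw [← Finset.union_assoc, ← Finset.union_assoc, Finset.union_comm a b]
  | trans _ _ ih1 ih2 => rw [ih1, ih2]

lemma listUnion_dedup (L : List PGraph) : listUnion L.dedup = listUnion L := by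
  induction L with
  | nil => rfl
  | cons a L ih =>
    by_cases h : a ∈ L
    · rw [List.dedup_cons_of_mem h, ih]
      simp only [listUnion, List.foldr_cons]
      exact (Finset.union_eq_right.mpr (subset_listUnion h)).symm
    · rw [List.dedup_cons_of_notMem h]
      show a ∪ listUnion L.dedup = a ∪ listUnion L
      rw [ih]

lemma dvecFrom_append (F : PGraph) (L M : List PGraph) :
    dvecFrom F (L ++ M) = dvecFrom F L + dvecFrom (F ∪ listUnion L) M := by
  induction L generalizing F with
  | nil => simp [dvecFrom, listUnion]
  | cons a L ih =>
    simp only [List.cons_append, dvecFrom]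
    rw [ih, Nat.add_assoc]
    congr 2
    simp only [listUnion, List.foldr_cons]
    rw [Finset.union_assoc]

lemma le_foldr_max {x : ℕ} {L : List ℕ} (h : x ∈ L) : x ≤ L.foldr max 0 := by
  induction L with
  | nil => simp at h
  | cons a L ih =>
    rcases List.mem_cons.mp h with rfl | h
    · exact le_max_left _ _
    · exact (ih h).trans (le_max_right _ _)

lemma foldr_max_le {L : List ℕ} (h : L ≠ []) : ∃ x ∈ L, L.foldr max 0 ≤ x := by
  induction L with
  | nil => simp at h
  | cons a L ih =>
    rcases eq_or_ne L [] with rfl | hL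
    · exact ⟨a, by simp⟩
    · obtain ⟨x, hx, hle⟩ := ih hL
      rcases le_total a (L.foldr max 0) with hc | hc
      · exact ⟨x, List.mem_cons_of_mem _ hx, by simp only [List.foldr_cons]; omega⟩
      · exact ⟨a, List.mem_cons_self, by simp only [List.foldr_cons]; omega⟩

-- new part
lemma branches_ne_nil (T : JoinTree) : T.branches ≠ [] := by
  induction T with
  | leaf G => simp [JoinTree.branches]
  | node T₁ T₂ ih₁ ih₂ =>
    simp only [JoinTree.branches, ne_eq, List.append_eq_nil_iff, List.map_eq_nil_iff]
    tauto

lemma branch_union {T : JoinTree} {b : List PGraph} (h : b ∈ T.branches) :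
    listUnion b = T.graph := by
  induction T generalizing b with
  | leaf G => simp only [JoinTree.branches, List.mem_singleton] at h
              subst h; simp [listUnion, JoinTree.graph]
  | node T₁ T₂ ih₁ ih₂ =>
    simp only [JoinTree.branches, List.mem_append, List.mem_map] at h
    rcases h with ⟨b₁, hb₁, rfl⟩ | ⟨b₂, hb₂, rfl⟩
    · show T₂.graph ∪ listUnion b₁ = _
      rw [ih₁ hb₁, JoinTree.graph, Finset.union_comm]
    · show T₁.graph ∪ listUnion b₂ = _
      rw [ih₂ hb₂, JoinTree.graph]

lemma dvec_le_Psi {T : JoinTree} {b : List PGraph} {q : List PGraph}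
    (hb : b ∈ T.branches) (hq : q.Perm b.dedup) : dvec q ≤ Psi T := by
  have h1 : dvec q ∈ ((b.dedup.permutations).map dvec) :=
    List.mem_map_of_mem (f := dvec) (List.mem_permutations.mpr hq)
  have h2 : dvec q ≤ ((b.dedup.permutations).map dvec).foldr max 0 := le_foldr_max h1
  refine h2.trans (le_foldr_max ?_)
  exact List.mem_map_of_mem hb

lemma exists_psi_achiever (T : JoinTree) :
    ∃ b ∈ T.branches, ∃ q : List PGraph, q.Perm b.dedup ∧ Psi T ≤ dvec q := by
  obtain ⟨y, hy, hle⟩ := foldr_max_le (L := T.branches.map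
    fun b => ((b.dedup.permutations).map dvec).foldr max 0)
    (by simp [branches_ne_nil T])
  obtain ⟨b, hb, rfl⟩ := List.mem_map.mp hy
  obtain ⟨z, hz, hle2⟩ := foldr_max_le (L := (b.dedup.permutations).map dvec)
    (List.ne_nil_of_mem (List.mem_map_of_mem (f := dvec) (List.mem_permutations.mpr (List.Perm.refl _))))
  obtain ⟨q, hq, rfl⟩ := List.mem_map.mp hz
  exact ⟨b, hb, q, List.mem_permutations.mp hq, hle.trans hle2⟩

lemma Psi_node_left (A B : JoinTree) :
    Psi A + Delta (ominus B.graph A.graph) ≤ Psi (JoinTree.node A B) := by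
  obtain ⟨b, hb, q, hq, hle⟩ := exists_psi_achiever A
  have hbU : listUnion b = A.graph := branch_union hb
  have hqU : listUnion q = A.graph := by rw [listUnion_perm hq, listUnion_dedup, hbU]
  have hb' : (B.graph :: b) ∈ (JoinTree.node A B).branches := by
    simp only [JoinTree.branches, List.mem_append, List.mem_map]
    exact Or.inl ⟨b, hb, rfl⟩
  by_cases hmem : B.graph ∈ b
  · -- Delta term is zero
    have h0 : Delta (ominus B.graph A.graph) = 0 := by
      rw [ominus_eq_empty_of_subset (hbU ▸ subset_listUnion hmem), Delta_empty]
    rw [h0]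
    have : q.Perm (B.graph :: b).dedup := by rw [List.dedup_cons_of_mem hmem]; exact hq
    simpa using (hle.trans (dvec_le_Psi hb' this))
  · have hperm : (q ++ [B.graph]).Perm (B.graph :: b).dedup := by
      rw [List.dedup_cons_of_notMem hmem]
      exact (List.perm_append_singleton _ _).trans (List.Perm.cons _ hq)
    have hval : dvec (q ++ [B.graph]) = dvec q + Delta (ominus B.graph A.graph) := by
      show dvecFrom ∅ _ = _
      rw [dvecFrom_append, hqU, Finset.empty_union]
      simp [dvecFrom, dvec]
    calc Psi A + Delta (ominus B.graph A.graph)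
        ≤ dvec q + Delta (ominus B.graph A.graph) := by omega
      _ = dvec (q ++ [B.graph]) := hval.symm
      _ ≤ Psi (JoinTree.node A B) := dvec_le_Psi hb' hperm

lemma Psi_node_right (A B : JoinTree) :
    Psi B + Delta (ominus A.graph B.graph) ≤ Psi (JoinTree.node A B) := by
  obtain ⟨b, hb, q, hq, hle⟩ := exists_psi_achiever B
  have hbU : listUnion b = B.graph := branch_union hb
  have hqU : listUnion q = B.graph := by rw [listUnion_perm hq, listUnion_dedup, hbU]
  have hb' : (A.graph :: b) ∈ (JoinTree.node A B).branches := by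
    simp only [JoinTree.branches, List.mem_append, List.mem_map]
    exact Or.inr ⟨b, hb, rfl⟩
  by_cases hmem : A.graph ∈ b
  · have h0 : Delta (ominus A.graph B.graph) = 0 := by
      rw [ominus_eq_empty_of_subset (hbU ▸ subset_listUnion hmem), Delta_empty]
    rw [h0]
    have : q.Perm (A.graph :: b).dedup := by rw [List.dedup_cons_of_mem hmem]; exact hq
    simpa using (hle.trans (dvec_le_Psi hb' this))
  · have hperm : (q ++ [A.graph]).Perm (A.graph :: b).dedup := by
      rw [List.dedup_cons_of_notMem hmem]
      exact (List.perm_append_singleton _ _).trans (List.Perm.cons _ hq)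
    have hval : dvec (q ++ [A.graph]) = dvec q + Delta (ominus A.graph B.graph) := by
      show dvecFrom ∅ _ = _
      rw [dvecFrom_append, hqU, Finset.empty_union]
      simp [dvecFrom, dvec]
    calc Psi B + Delta (ominus A.graph B.graph)
        ≤ dvec q + Delta (ominus A.graph B.graph) := by omega
      _ = dvec (q ++ [A.graph]) := hval.symm
      _ ≤ Psi (JoinTree.node A B) := dvec_le_Psi hb' hperm

lemma seqList_succ {m : ℕ} (G : Fin (m + 1) → PGraph) :
    seqList G = seqList (fun i : Fin m => G i.castSucc) ++ [G (Fin.last m)] := by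
  rw [seqList, seqList, ← List.ofFn_eq_map, ← List.ofFn_eq_map, List.ofFn_succ']
  simp [List.concat_eq_append]

lemma graph_semComb (m : ℕ) (S : Fin (m + 1) → JoinTree) :
    (semComb m S).graph = listUnion (seqList fun i => (S i).graph) := by
  induction m with
  | zero =>
    show (S 0).graph = listUnion [(S 0).graph]
    simp [listUnion]
  | succ m ih =>
    show ((semComb m _).graph ∪ (semComb m _).graph) = _
    rw [ih, ih, seqList_succ (fun i : Fin (m+1+1) => (S i).graph)]
    rw [seqList_succ (fun i : Fin (m+1) => (S i.castSucc).graph)]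
    rw [seqList_succ (fun i : Fin (m+1) => (if (i : ℕ) = m then S (Fin.last (m+1)) else S i.castSucc).graph)]
    have e1 : (fun i : Fin m => (if ((i.castSucc : Fin (m+1)) : ℕ) = m then S (Fin.last (m+1)) else S i.castSucc.castSucc).graph)
        = fun i : Fin m => (S i.castSucc.castSucc).graph := by
      funext i
      rw [if_neg]
      exact Nat.ne_of_lt i.isLt
    have e2 : (if ((Fin.last m : Fin (m+1)) : ℕ) = m then S (Fin.last (m+1)) else S (Fin.last m).castSucc) = S (Fin.last (m+1)) := if_pos rfl
    rw [e1, e2]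
    simp only [listUnion_append]
    have hc : (fun i : Fin m => (S (i.castSucc : Fin (m+1)).castSucc).graph) = fun i : Fin m => (S i.castSucc.castSucc).graph := rfl
    rw [hc]
    ext x
    simp only [Finset.mem_union]
    tauto

lemma seqList_prime (m : ℕ) (T : Fin (m+2) → JoinTree) :
    (seqList fun i : Fin (m+1) =>
        ((fun i : Fin (m+1) => if (i:ℕ) = m then T (Fin.last (m+1)) else T i.castSucc) i).graph)
      = (seqList fun i : Fin m => (T i.castSucc.castSucc).graph)
        ++ [(T (Fin.last (m+1))).graph] := by
  rw [seqList_succ]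
  congr 1
  · congr 1
    funext i
    show (if ((i.castSucc : Fin (m+1)) : ℕ) = m then T (Fin.last (m+1))
      else T i.castSucc.castSucc).graph = _
    simp only [Fin.coe_castSucc]
    rw [if_neg (Nat.ne_of_lt i.isLt)]
  · show [(if ((Fin.last m : Fin (m+1)) : ℕ) = m then T (Fin.last (m+1))
      else T (Fin.last m).castSucc).graph] = _
    simp only [Fin.val_last, if_true, reduceIte]


/-- **Corollary 5.6.**  Suppose `T = ⟦T_1,…,T_m⟧` where `T_j` is a `G_j`-join tree.  Then for
every `j`, `Ψ(T) ≥ Ψ(T_j) + Δ⃗(G_1,…,G_m ∣ G_j)`. -/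
theorem psi_semComb_single (m : ℕ) (T : Fin (m + 1) → JoinTree) (hval : ∀ i, (T i).valid)
    (j : Fin (m + 1)) :
    Psi (T j) + dvecFrom ((T j).graph) (seqList fun i => (T i).graph) ≤
      Psi (semComb m T) := by

  induction m with
  | zero =>
    have hj : j = 0 := Fin.fin_one_eq_zero j
    subst hj
    show Psi (T 0) + dvecFrom ((T 0).graph) (seqList fun i => (T i).graph) ≤ Psi (T 0)
    have : (seqList fun i : Fin 1 => (T i).graph) = [(T 0).graph] := rfl
    rw [this]
    show Psi (T 0) + (Delta (ominus (T 0).graph (T 0).graph) + 0) ≤ Psi (T 0)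
    rw [ominus_eq_empty_of_subset (subset_refl _), Delta_empty]
    omega
  | succ m ih =>
    set A := semComb m (fun i : Fin (m+1) => T i.castSucc) with hA
    set B := semComb m (fun i : Fin (m+1) =>
      if (i : ℕ) = m then T (Fin.last (m+1)) else T i.castSucc) with hB
    have hsem : semComb (m+1) T = JoinTree.node A B := rfl
    set L := seqList fun i : Fin (m+1) => (T i.castSucc).graph with hLdef
    set L' := seqList fun i : Fin m => (T i.castSucc.castSucc).graph with hL'def
    set a := (T (Fin.last m).castSucc).graph with ha
    set gl := (T (Fin.last (m+1))).graph with hgl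
    have hL : L = L' ++ [a] := seqList_succ _
    have hAg : A.graph = listUnion L := graph_semComb m _
    have hBg : B.graph = listUnion L' ∪ gl := by
      rw [hB, graph_semComb m _, seqList_prime m T, listUnion_append]
      congr 1
      show gl ∪ ∅ = gl
      exact Finset.union_empty gl
    have hseqsplit : (seqList fun i : Fin (m+1+1) => (T i).graph) = L ++ [gl] :=
      seqList_succ _
    have hL'L : listUnion L' ⊆ listUnion L := by
      rw [hL, listUnion_append]; exact Finset.subset_union_left
    rw [hsem, hseqsplit]
    by_cases hj : (j : ℕ) < m + 1
    · -- j is not the last index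
      have hcast : (Fin.castLT j hj).castSucc = j := Fin.castSucc_castLT j hj
      have hIH := ih (fun i : Fin (m+1) => T i.castSucc) (fun i => hval i.castSucc) (Fin.castLT j hj)

      rw [hcast] at hIH
      have hGjL : (T j).graph ∈ L := by
        rw [hLdef, seqList]
        exact List.mem_map.mpr ⟨Fin.castLT j hj, List.mem_finRange _, by rw [hcast]⟩
      have hunion : (T j).graph ∪ listUnion L = listUnion L :=
        Finset.union_eq_right.mpr (subset_listUnion hGjL)
      rw [dvecFrom_append, hunion]
      have hDelta : dvecFrom (listUnion L) [gl] = Delta (ominus B.graph A.graph) := by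
        show Delta (ominus gl (listUnion L)) + 0 = _
        rw [hAg, hBg, ominus_union_left hL'L, Nat.add_zero]
      rw [hDelta, ← Nat.add_assoc]
      exact Nat.add_le_add_right (hIH.trans_eq rfl) _ |>.trans (Psi_node_left A B)
    · -- j is the last index
      have hj' : j = Fin.last (m+1) := by
        apply Fin.ext
        have := j.isLt
        simp only [Fin.val_last]
        omega
      subst hj'
      have hIH := ih (fun i : Fin (m+1) =>
        if (i : ℕ) = m then T (Fin.last (m+1)) else T i.castSucc)
        (fun i => by split <;> exact hval _) (Fin.last m)

      have hTlast : (if ((Fin.last m : Fin (m+1)) : ℕ) = m then T (Fin.last (m+1))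
          else T (Fin.last m).castSucc) = T (Fin.last (m+1)) := if_pos rfl
      rw [hTlast] at hIH
      rw [seqList_prime m T] at hIH
      have hglr : (T (Fin.last (m+1))).graph = gl := rfl
      have hL'r : (seqList fun i : Fin m => (T i.castSucc.castSucc).graph) = L' := rfl
      rw [hglr, hL'r] at hIH
      rw [hglr]
      rw [dvecFrom_append] at hIH
      have hzero : dvecFrom (gl ∪ listUnion L') [gl] = 0 := by
        show Delta (ominus gl (gl ∪ listUnion L')) + 0 = 0
        rw [ominus_eq_empty_of_subset Finset.subset_union_left, Delta_empty]
      rw [hzero] at hIH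
      rw [← hB] at hIH
      -- hIH : Psi (T last) + dvecFrom gl L' ≤ Psi B
      have hsplit2 : L ++ [gl] = L' ++ ([a] ++ [gl]) := by rw [hL, List.append_assoc]
      rw [hsplit2, dvecFrom_append]
      have hF' : dvecFrom (gl ∪ listUnion L') ([a] ++ [gl]) =
          Delta (ominus a (gl ∪ listUnion L')) := by
        show Delta (ominus a (gl ∪ listUnion L')) +
          (Delta (ominus gl ((gl ∪ listUnion L') ∪ a)) + 0) = _
        rw [ominus_eq_empty_of_subset
          (Finset.subset_union_left.trans Finset.subset_union_left), Delta_empty]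
        omega
      rw [hF']
      have hDelta2 : Delta (ominus A.graph B.graph) =
          Delta (ominus a (gl ∪ listUnion L')) := by
        have h1 : A.graph = listUnion L' ∪ a := by
          rw [hAg, hL, listUnion_append]
          congr 1
          show a ∪ ∅ = a
          exact Finset.union_empty a
        have h2 : B.graph = gl ∪ listUnion L' := by rw [hBg, Finset.union_comm]
        have hsub : listUnion L' ⊆ gl ∪ listUnion L' := Finset.subset_union_right
        rw [h1, h2, ominus_union_left hsub]
      calc Psi (T (Fin.last (m+1))) + (dvecFrom gl L' + Delta (ominus a (gl ∪ listUnion L')))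
          = (Psi (T (Fin.last (m+1))) + dvecFrom gl L') + Delta (ominus a (gl ∪ listUnion L')) := by omega
        _ ≤ Psi B + Delta (ominus A.graph B.graph) := by rw [hDelta2]; omega
        _ ≤ Psi (JoinTree.node A B) := Psi_node_right A B
end
end
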